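/- arXiv:1401.8105 — 7 statements merged into one kernel-verified Lean document; each statement's English description precedes it below -/
import Mathlib

section
/- If C is a directed partial order and V an ultrafilter on ω with V Tukey reducible to C (ordered by ≥), then there exists a monotone cofinal map f : C → V, i.e., a map that reverses order appropriately (X ≥ Y implies f(X) ⊆ f(Y)) and whose image of any cofinal set is cofinal. -/
/-- If `C` is a directed partial order (directed downwards, so that `(C, ≥)` is
directed upwards, as for a filter base ordered by `⊇`) and `V` is an ultrafilter on `ω` that
is Tukey reducible to `(C, ≥)`, then there is a *monotone* cofinal map `f : C → V`:
`f` takes values in `V`, satisfies `f y ⊆ f x` whenever `y ≤ x`, and sends every cofinal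
subset of `(C, ≥)` to a cofinal subset of `(V, ⊇)`. -/
theorem stmt_2 {C : Type} [PartialOrder C]
    (hdir : ∀ a b : C, ∃ c : C, c ≤ a ∧ c ≤ b)
    (V : Ultrafilter ℕ)
    (hT : ∃ g : C → Set ℕ, (∀ c : C, g c ∈ V) ∧
      ∀ D : Set C, (∀ c : C, ∃ d ∈ D, d ≤ c) →
        ∀ A ∈ V, ∃ d ∈ D, g d ⊆ A) :
    ∃ f : C → Set ℕ,
      (∀ c : C, f c ∈ V) ∧
      (∀ x y : C, y ≤ x → f y ⊆ f x) ∧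
      (∀ D : Set C, (∀ c : C, ∃ d ∈ D, d ≤ c) →
        ∀ A ∈ V, ∃ d ∈ D, f d ⊆ A) := by
  obtain ⟨g, hg, hcof⟩ := hT
  refine ⟨fun c => {n | ∃ d ≤ c, n ∈ g d}, ?_, ?_, ?_⟩
  · intro c
    exact Filter.mem_of_superset (hg c) (fun n hn => ⟨c, le_refl c, hn⟩)
  · rintro x y hyx n ⟨d, hdy, hn⟩
    exact ⟨d, hdy.trans hyx, hn⟩
  · intro D hD A hA
    have key : ∃ c : C, ∀ d ≤ c, g d ⊆ A := by
      by_contra h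
      push_neg at h
      obtain ⟨d, hd, hsub⟩ := hcof {d | ¬ g d ⊆ A}
        (fun c => by obtain ⟨d, hdc, hnd⟩ := h c; exact ⟨d, hnd, hdc⟩) A hA
      exact hd hsub
    obtain ⟨c, hc⟩ := key
    obtain ⟨d, hdD, hdc⟩ := hD c
    exact ⟨d, hdD, by rintro n ⟨e, hed, hn⟩; exact hc e (hed.trans hdc) hn⟩
end

section
/- A nonprincipal ultrafilter U on ω is selective (every f : ω → ω is constant or one-to-one on a set in U) if and only if U is Ramsey (every 2-coloring of pairs from ω has a monochromatic set in U). -/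
set_option maxHeartbeats 1000000


/-- A nonprincipal ultrafilter on ω is selective (every function is constant
or injective on some member) iff it is Ramsey (every 2-coloring of pairs has a monochromatic
member). -/
theorem stmt_5 (U : Ultrafilter ℕ) (hnp : ∀ A : Set ℕ, A.Finite → A ∉ U) :
    (∀ f : ℕ → ℕ, ∃ X ∈ U, (∀ a ∈ X, ∀ b ∈ X, f a = f b) ∨ Set.InjOn f X) ↔
    (∀ c : ℕ → ℕ → Fin 2, ∃ X ∈ U, ∃ i : Fin 2,
      ∀ a ∈ X, ∀ b ∈ X, a < b → c a b = i) := by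
  classical
  have hfin2 : ∀ j : Fin 2, j ≠ 0 → j = 1 := by decide
  -- For any Fin-2 valued function, some fiber is in U.
  have hfib : ∀ g : ℕ → Fin 2, ∃ j : Fin 2, {n | g n = j} ∈ U := by
    intro g
    by_cases h : {n | g n = 0} ∈ U
    · exact ⟨0, h⟩
    · refine ⟨1, ?_⟩
      have h' : {n | g n = 0}ᶜ ∈ U := (Ultrafilter.compl_mem_iff_notMem).mpr h
      have he : {n | g n = 0}ᶜ = {n | g n = 1} := by
        ext n
        simp only [Set.mem_compl_iff, Set.mem_setOf_eq]
        exact ⟨hfin2 _, fun h1 => by rw [h1]; decide⟩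
      rwa [he] at h'
  constructor
  · -- selective → Ramsey
    intro hsel c
    -- choose for each n the big color
    have hch : ∀ n, ∃ j : Fin 2, {m | c n m = j} ∈ U := fun n => hfib (c n)
    choose i hi using hch
    obtain ⟨i₀, hY⟩ := hfib i
    set Y : Set ℕ := {n | i n = i₀} with hYdef
    -- the sets E n and D n
    set E : ℕ → Set ℕ := fun n => {m | ∀ k ≤ n, k ∈ Y → c k m = i₀} with hEdef
    have hE : ∀ n, E n ∈ U := by
      intro n
      have heq : E n = ⋂ k ∈ Set.Iic n, {m | k ∈ Y → c k m = i₀} := by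
        ext m; simp [hEdef, Set.mem_iInter]
      rw [heq, ← Ultrafilter.mem_coe, Filter.biInter_mem (Set.finite_Iic n)]
      intro k hk
      by_cases hkY : k ∈ Y
      · have hm : {m | c k m = i k} ∈ U := hi k
        rw [show i k = i₀ from hkY] at hm
        exact Filter.mem_of_superset hm (fun m hm _ => hm)
      · exact Filter.mem_of_superset Filter.univ_mem (fun m _ h => absurd h hkY)
    have hcof : ∀ n : ℕ, {m : ℕ | n < m} ∈ U := by
      intro n
      have h1 : {m : ℕ | n < m}ᶜ = Set.Iic n := by ext m; simp
      have h2 : {m : ℕ | n < m}ᶜ ∉ U := by rw [h1]; exact hnp _ (Set.finite_Iic n)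
      exact (Ultrafilter.compl_notMem_iff).mp h2
    set D : ℕ → Set ℕ := fun n => Y ∩ E n ∩ {m | n < m} with hDdef
    have hD : ∀ n, D n ∈ U := fun n =>
      Filter.inter_mem (Filter.inter_mem hY (hE n)) (hcof n)
    have hDlt : ∀ n m, m ∈ D n → n < m := fun n m hm => hm.2
    have hDself : ∀ m, m ∉ D m := fun m hm => lt_irrefl m (hDlt m m hm)
    -- the regressive-style function f
    have hex : ∀ m, ∃ n, m ∉ D n := fun m => ⟨m, hDself m⟩
    set f : ℕ → ℕ := fun m => Nat.find (hex m) with hfdef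
    have hfspec : ∀ m, m ∉ D (f m) := fun m => Nat.find_spec (hex m)
    have hfle : ∀ m n, m ∉ D n → f m ≤ n := fun m n h => Nat.find_le h
    -- first application of selectivity
    obtain ⟨X, hXU, hXc⟩ := hsel f
    have hXinj : Set.InjOn f X := by
      rcases hXc with hconst | hinj
      · exfalso
        obtain ⟨a₀, ha₀⟩ := Filter.nonempty_of_mem (f := (U : Filter ℕ)) hXU
        obtain ⟨b, hbX, hbD⟩ :=
          Filter.nonempty_of_mem (f := (U : Filter ℕ)) (Filter.inter_mem hXU (hD (f a₀)))
        have hfb : f b = f a₀ := hconst b hbX a₀ ha₀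
        exact hfspec b (hfb ▸ hbD)
      · exact hinj
    set X₁ : Set ℕ := X ∩ D 0 with hX₁def
    have hX₁U : X₁ ∈ U := Filter.inter_mem hXU (hD 0)
    have hX₁Y : X₁ ⊆ Y := fun m hm => hm.2.1.1
    -- X₁ is almost contained in every D n
    have hfin : ∀ n, (X₁ \ D n).Finite := by
      intro n
      have hsub : X₁ \ D n ⊆ {m ∈ X | f m ≤ n} := by
        rintro m ⟨hm1, hm2⟩
        exact ⟨hm1.1, hfle m n hm2⟩
      refine Set.Finite.subset ?_ hsub
      refine Set.Finite.of_finite_image ?_ (hXinj.mono (fun m hm => hm.1))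
      refine Set.Finite.subset (Set.finite_Iic n) ?_
      rintro _ ⟨m, hm, rfl⟩
      exact hm.2
    have hg : ∀ n, ∃ N, ∀ m ∈ X₁ \ D n, m < N := by
      intro n
      obtain ⟨N, hN⟩ := (hfin n).bddAbove
      exact ⟨N + 1, fun m hm => Nat.lt_succ_of_le (hN hm)⟩
    choose g hgspec using hg
    set G : ℕ → ℕ := fun n => (Finset.range (n + 1)).sup g + n + 1 with hGdef
    have hGmono : Monotone G := by
      intro a b hab
      have h1 : (Finset.range (a + 1)).sup g ≤ (Finset.range (b + 1)).sup g :=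
        Finset.sup_mono (Finset.range_subset_range.mpr (by omega))
      simp only [hGdef]
      omega
    have hGg : ∀ n, g n ≤ G n := by
      intro n
      have h1 : g n ≤ (Finset.range (n + 1)).sup g :=
        Finset.le_sup (Finset.mem_range.mpr (by omega))
      simp only [hGdef]
      omega
    have hGn : ∀ n, n < G n := fun n => by simp only [hGdef]; omega
    have hkey : ∀ n, ∀ m ∈ X₁, G n ≤ m → m ∈ D n := by
      intro n m hm hGm
      by_contra hmd
      exact absurd (hgspec n m ⟨hm, hmd⟩) (by have := hGg n; omega)
    -- the interval sequence
    set nseq : ℕ → ℕ := fun k => Nat.rec 0 (fun _ x => G x) k with hnseqdef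
    have hnseqS : ∀ k, nseq (k + 1) = G (nseq k) := fun k => rfl
    have hnseqSM : StrictMono nseq := strictMono_nat_of_lt_succ (fun k => by
      rw [hnseqS]; exact hGn _)
    have hnseqle : ∀ k, k ≤ nseq k := fun k => hnseqSM.le_apply
    set ind : ℕ → ℕ := fun m => Nat.findGreatest (fun k => nseq k ≤ m) m with hinddef
    have hind1 : ∀ m, nseq (ind m) ≤ m := by
      intro m
      show nseq (Nat.findGreatest (fun k => nseq k ≤ m) m) ≤ m
      exact Nat.findGreatest_spec (P := fun k => nseq k ≤ m) (Nat.zero_le m) (Nat.zero_le m)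
    have hind2 : ∀ m, m < nseq (ind m + 1) := by
      intro m
      by_contra h
      push_neg at h
      have h1 : ind m + 1 ≤ m := le_trans (hnseqle _) h
      have h2 : ind m + 1 ≤ ind m := Nat.le_findGreatest h1 h
      omega
    have hindmono : Monotone ind := by
      intro a b hab
      exact Nat.le_findGreatest (le_trans (le_trans (hnseqle _) (hind1 a)) hab)
        (le_trans (hind1 a) hab)
    -- second application of selectivity
    obtain ⟨X', hX'U, hX'c⟩ := hsel ind
    have hX'inj : Set.InjOn ind X' := by
      rcases hX'c with hconst | hinj
      · exfalso
        obtain ⟨a₀, ha₀⟩ := Filter.nonempty_of_mem (f := (U : Filter ℕ)) hX'U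
        have hsub : X' ⊆ Set.Iio (nseq (ind a₀ + 1)) := by
          intro m hm
          have he : ind m = ind a₀ := hconst m hm a₀ ha₀
          exact lt_of_lt_of_le (hind2 m) (le_of_eq (by rw [he]))
        exact hnp X' (Set.Finite.subset (Set.finite_Iio _) hsub) hX'U
      · exact hinj
    set X₂ : Set ℕ := X' ∩ X₁ with hX₂def
    have hX₂U : X₂ ∈ U := Filter.inter_mem hX'U hX₁U
    -- parity refinement
    obtain ⟨P, hPU, hPpar⟩ : ∃ P ∈ U, ∀ a ∈ P, ∀ b ∈ P, (Even (ind a) ↔ Even (ind b)) := by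
      by_cases h : {m | Even (ind m)} ∈ U
      · exact ⟨_, h, fun a ha b hb => iff_of_true ha hb⟩
      · exact ⟨{m | Even (ind m)}ᶜ, (Ultrafilter.compl_mem_iff_notMem).mpr h,
          fun a ha b hb => iff_of_false ha hb⟩
    set X₃ : Set ℕ := X₂ ∩ P with hX₃def
    have hX₃U : X₃ ∈ U := Filter.inter_mem hX₂U hPU
    refine ⟨X₃, hX₃U, i₀, ?_⟩
    intro a ha b hb hab
    have haX₁ : a ∈ X₁ := ha.1.2
    have hbX₁ : b ∈ X₁ := hb.1.2
    have hlt : ind a < ind b := by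
      have h1 : ind a ≤ ind b := hindmono (le_of_lt hab)
      have h2 : ind a ≠ ind b := fun h => absurd (hX'inj ha.1.1 hb.1.1 h) (ne_of_lt hab)
      omega
    have hpar : Even (ind a) ↔ Even (ind b) := hPpar a ha.2 b hb.2
    have h2lt : ind a + 2 ≤ ind b := by
      rcases Nat.lt_or_ge (ind b) (ind a + 2) with h | h
      · have hb1 : ind b = ind a + 1 := by omega
        rw [hb1, Nat.even_add_one] at hpar
        tauto
      · exact h
    -- conclude b ∈ D a
    have hbD : b ∈ D a := by
      apply hkey a b hbX₁
      calc G a ≤ G (nseq (ind a + 1)) := hGmono (le_of_lt (hind2 a))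
        _ = nseq (ind a + 1 + 1) := (hnseqS (ind a + 1)).symm
        _ ≤ nseq (ind b) := hnseqSM.monotone (show ind a + 1 + 1 ≤ ind b by omega)
        _ ≤ b := hind1 b
    exact hbD.1.2 a (le_refl a) (hX₁Y haX₁)
  · -- Ramsey → selective
    intro hram f
    obtain ⟨X, hXU, i, hi⟩ := hram (fun a b => if f a = f b then 0 else 1)
    refine ⟨X, hXU, ?_⟩
    by_cases h0 : i = 0
    · left
      intro a ha b hb
      rcases lt_trichotomy a b with h | h | h
      · have hc := hi a ha b hb h
        rw [h0] at hc
        by_contra hne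
        rw [if_neg hne] at hc
        exact absurd hc (by decide)
      · rw [h]
      · have hc := hi b hb a ha h
        rw [h0] at hc
        by_contra hne
        rw [if_neg (fun he => hne he.symm)] at hc
        exact absurd hc (by decide)
    · right
      intro a ha b hb hfe
      by_contra hne
      rcases Ne.lt_or_gt hne with h | h
      · have hc := hi a ha b hb h
        rw [if_pos hfe] at hc
        exact h0 hc.symm
      · have hc := hi b hb a ha h
        rw [if_pos hfe.symm] at hc
        exact h0 hc.symm
end

section
/- A nonprincipal ultrafilter on ω is Ramsey if and only if it is both a p-point and a q-point. -/
/-- A nonprincipal ultrafilter on ω is Ramsey iff it is both a p-point and a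
q-point. -/
theorem stmt_6 (U : Ultrafilter ℕ) (hnp : ∀ A : Set ℕ, A.Finite → A ∉ U) :
    (∀ c : ℕ → ℕ → Fin 2, ∃ X ∈ U, ∃ i : Fin 2,
      ∀ a ∈ X, ∀ b ∈ X, a < b → c a b = i) ↔
    ((∀ X : ℕ → Set ℕ, (∀ n, X n ∈ U) → ∃ Y ∈ U, ∀ n, (Y \ X n).Finite) ∧
     (∀ I : ℕ → Set ℕ, (∀ n, (I n).Finite) →
        (Pairwise fun n m => Disjoint (I n) (I m)) →
        (⋃ n, I n) = Set.univ →
        ∃ X ∈ U, ∀ n, (X ∩ I n).Subsingleton)) := by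
  classical
  constructor
  · intro hR
    constructor
    · -- Ramsey → p-point
      intro X hX
      set X' : ℕ → Set ℕ := fun n => ⋂ k ≤ n, X k with hX'def
      have hX'U : ∀ n, X' n ∈ U :=
        fun n => (Filter.biInter_mem (Set.finite_Iic n)).2 fun k _ => hX k
      obtain ⟨Y, hY, i, hmono⟩ := hR (fun a b => if b ∈ X' a then 0 else 1)
      have hYinf : Y.Infinite := fun hfin => hnp Y hfin hY
      have hi : i = 0 := by
        by_contra h0
        obtain ⟨a, ha⟩ := hYinf.nonempty
        have hmem : Y ∩ X' a ∈ U := Filter.inter_mem hY (hX'U a)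
        have hinf : (Y ∩ X' a).Infinite := fun hfin => hnp _ hfin hmem
        obtain ⟨b, hb, hab⟩ := hinf.exists_gt a
        have h := hmono a ha b hb.1 hab
        rw [if_pos hb.2] at h
        exact h0 h.symm
      refine ⟨Y, hY, fun n => ?_⟩
      obtain ⟨a, ha, hna⟩ := hYinf.exists_gt n
      apply Set.Finite.subset (Set.finite_Iic a)
      intro b hb
      by_contra hba
      have hba' : a < b := Nat.lt_of_not_le (fun h => hba h)
      have h := hmono a ha b hb.1 hba'
      rw [hi] at h
      have hbX : b ∈ X' a := by
        by_contra hnb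
        rw [if_neg hnb] at h
        exact absurd h (by decide)
      exact hb.2 (Set.mem_iInter₂.1 hbX n (le_of_lt hna))
    · -- Ramsey → q-point
      intro I hfin hdisj hcov
      have hpx : ∀ x : ℕ, ∃ n, x ∈ I n := by
        intro x
        have : x ∈ ⋃ n, I n := hcov ▸ Set.mem_univ x
        exact Set.mem_iUnion.1 this
      choose p hp using hpx
      have hpu : ∀ x n, x ∈ I n → p x = n := by
        intro x n hx
        by_contra hne
        exact Set.disjoint_left.1 (hdisj hne) (hp x) hx
      obtain ⟨Y, hY, i, hmono⟩ := hR (fun a b => if p a = p b then 0 else 1)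
      have hYinf : Y.Infinite := fun hf => hnp Y hf hY
      have hi : i = 1 := by
        by_contra h1
        obtain ⟨a, ha⟩ := hYinf.nonempty
        apply hYinf
        apply Set.Finite.subset ((Set.finite_Iic a).union (hfin (p a)))
        intro b hb
        rcases le_or_gt b a with h | h
        · exact Or.inl h
        · have hc := hmono a ha b hb h
          have hpe : p a = p b := by
            by_contra hne
            rw [if_neg hne] at hc
            exact h1 hc.symm
          exact Or.inr (hpe ▸ hp b)
      refine ⟨Y, hY, fun n => ?_⟩
      have key : ∀ x y : ℕ, x ∈ Y ∩ I n → y ∈ Y ∩ I n → x < y → False := by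
        intro x y hx hy hxy
        have h := hmono x hx.1 y hy.1 hxy
        rw [hi] at h
        have hpe : p x = p y := by rw [hpu x n hx.2, hpu y n hy.2]
        rw [if_pos hpe] at h
        exact absurd h (by decide)
      intro a ha b hb
      by_contra hne
      rcases Ne.lt_or_gt hne with h | h
      · exact key a b ha hb h
      · exact key b a hb ha h
  · -- p-point ∧ q-point → Ramsey
    rintro ⟨hp, hq⟩ c
    have key : ∀ i : Fin 2, ∀ A : Set ℕ, A ∈ U → (∀ a ∈ A, {b | c a b = i} ∈ U) →
        ∃ X ∈ U, ∃ j : Fin 2, ∀ a ∈ X, ∀ b ∈ X, a < b → c a b = j := by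
      intro i A hA hAc
      set Xf : ℕ → Set ℕ := fun a => if a ∈ A then {b | c a b = i} else Set.univ with hXfdef
      have hXfU : ∀ a, Xf a ∈ U := by
        intro a; by_cases h : a ∈ A
        · simpa only [hXfdef, if_pos h] using hAc a h
        · simp only [hXfdef, if_neg h]; exact Filter.univ_mem
      obtain ⟨Y, hY, hYfin⟩ := hp Xf hXfU
      have hbdd : ∀ a, ∃ N, ∀ b ∈ Y \ Xf a, b ≤ N := by
        intro a
        obtain ⟨N, hN⟩ := (hYfin a).bddAbove
        exact ⟨N, fun b hb => hN hb⟩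
      choose g hg using hbdd
      -- the interval endpoints
      set seq : ℕ → ℕ :=
        fun k => Nat.rec 0 (fun _ nk => (Finset.range (nk + 1)).sup g + nk + 1) k with hseqdef
      have hseq0 : seq 0 = 0 := rfl
      have hseqS : ∀ k, seq (k + 1) = (Finset.range (seq k + 1)).sup g + seq k + 1 :=
        fun k => rfl
      have hsm : StrictMono seq := by
        apply strictMono_nat_of_lt_succ
        intro k
        rw [hseqS k]
        omega
      have hgb : ∀ k a, a ≤ seq k → g a < seq (k + 1) := by
        intro k a hka
        rw [hseqS k]
        have : g a ≤ (Finset.range (seq k + 1)).sup g :=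
          Finset.le_sup (Finset.mem_range.2 (Nat.lt_succ_of_le hka))
        omega
      set idx : ℕ → ℕ := fun x => Nat.findGreatest (fun k => seq k ≤ x) x with hidxdef
      have hidx1 : ∀ x, seq (idx x) ≤ x := by
        intro x
        exact Nat.findGreatest_spec (P := fun k => seq k ≤ x) (Nat.zero_le x)
          (by simp [hseq0])
      have hidx2 : ∀ x, x < seq (idx x + 1) := by
        intro x
        by_cases h : idx x + 1 ≤ x
        · have h2 := Nat.findGreatest_is_greatest (P := fun k => seq k ≤ x)
            (Nat.lt_succ_self (idx x)) h
          simp only [Nat.succ_eq_add_one] at h2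
          omega
        · have h2 := hsm.le_apply (x := idx x + 1)
          omega
      set Iv : ℕ → Set ℕ := fun k => Set.Ico (seq k) (seq (k + 1)) with hIvdef
      have hIvfin : ∀ k, (Iv k).Finite := fun k => Set.finite_Ico _ _
      have hIvdisj : Pairwise fun n m => Disjoint (Iv n) (Iv m) := by
        intro k m hkm
        rw [Set.disjoint_left]
        rintro x ⟨hx1, hx2⟩ ⟨hx3, hx4⟩
        rcases Ne.lt_or_gt hkm with h | h
        · exact absurd (lt_of_lt_of_le hx2 (hsm.monotone h)) (not_lt.2 hx3)
        · exact absurd (lt_of_lt_of_le hx4 (hsm.monotone h)) (not_lt.2 hx1)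
      have hIvcov : (⋃ k, Iv k) = Set.univ := by
        ext x
        simp only [Set.mem_iUnion, Set.mem_univ, iff_true]
        exact ⟨idx x, hidx1 x, hidx2 x⟩
      obtain ⟨Z, hZ, hZss⟩ := hq Iv hIvfin hIvdisj hIvcov
      have hmemIv : ∀ x, x ∈ Iv (idx x) := fun x => ⟨hidx1 x, hidx2 x⟩
      -- parity set
      obtain ⟨P, hPU, hPpar⟩ : ∃ P ∈ U, ∀ x ∈ P, ∀ y ∈ P, (Even (idx x) ↔ Even (idx y)) := by
        rcases U.mem_or_compl_mem {x | Even (idx x)} with h | h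
        · exact ⟨_, h, fun x hx y hy => iff_of_true hx hy⟩
        · exact ⟨_, h, fun x hx y hy => iff_of_false hx hy⟩
      refine ⟨Z ∩ Y ∩ A ∩ P, Filter.inter_mem (Filter.inter_mem (Filter.inter_mem hZ hY) hA) hPU,
        i, ?_⟩
      rintro a ⟨⟨⟨haZ, haY⟩, haA⟩, haP⟩ b ⟨⟨⟨hbZ, hbY⟩, hbA⟩, hbP⟩ hab
      have hne : idx a ≠ idx b := by
        intro he
        have := hZss (idx a) ⟨haZ, hmemIv a⟩ ⟨hbZ, he ▸ hmemIv b⟩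
        omega
      have hlt : idx a < idx b := by
        rcases Ne.lt_or_gt hne with h | h
        · exact h
        · have h1 := hidx2 b
          have h2 := hidx1 a
          have := hsm.monotone (show idx b + 1 ≤ idx a from h)
          omega
      have hpar := hPpar a haP b hbP
      have h2 : idx a + 2 ≤ idx b := by
        rcases Nat.even_or_odd (idx a) with he | ho
        · have hb := hpar.1 he
          rw [Nat.even_iff] at he hb
          omega
        · have hb : ¬ Even (idx b) := fun h => (Nat.not_even_iff_odd.2 ho) (hpar.2 h)
          rw [Nat.not_even_iff] at hb
          rw [Nat.odd_iff] at ho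
          omega
      have hgab : g a < b := by
        have h1 : a ≤ seq (idx a + 1) := le_of_lt (hidx2 a)
        have h2' : g a < seq (idx a + 2) := hgb (idx a + 1) a h1
        have h3 : seq (idx a + 2) ≤ seq (idx b) := hsm.monotone h2
        have h4 := hidx1 b
        omega
      have hbXf : b ∈ Xf a := by
        by_contra hnb
        exact absurd (hg a b ⟨hbY, hnb⟩) (not_le.2 hgab)
      rw [hXfdef] at hbXf
      simp only [if_pos haA, Set.mem_setOf_eq] at hbXf
      exact hbXf
    rcases U.mem_or_compl_mem {a | {b | c a b = 0} ∈ U} with h | h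
    · exact key 0 _ h (fun a ha => ha)
    · apply key 1 _ h
      intro a ha
      have hcompl : {b | c a b = 0}ᶜ ∈ U := Ultrafilter.compl_mem_iff_notMem.2 ha
      have heq : {b | c a b = 0}ᶜ = {b | c a b = 1} := by
        ext b
        simp only [Set.mem_compl_iff, Set.mem_setOf_eq]
        omega
      rwa [heq] at hcompl
end

section
/- Finite Erdős–Rado canonization theorem: for all n ≤ l there exists m > l such that for every equivalence relation E on [m]^n there is an l-element subset s ⊆ m and a set I ⊆ n with E restricted to [s]^n equal to E_I restricted to [s]^n. -/
set_option maxHeartbeats 1000000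
open Finset

section RankMachinery
variable {α : Type*} {β : Type*} [LinearOrder α] [LinearOrder β]

def rk (s : Finset α) (x : α) : ℕ := #(s.filter (· < x))

lemma card_filter_lt_fin {q : ℕ} (i : Fin q) :
    #((univ : Finset (Fin q)).filter (· < i)) = (i : ℕ) := by
  have : (univ : Finset (Fin q)).filter (· < i) = Finset.Iio i := by
    ext x; simp [Finset.mem_Iio]
  rw [this, Fin.card_Iio]

lemma rk_image_fin {q : ℕ} (f : Fin q → α) (hf : StrictMono f) (i : Fin q) :
    rk (image f univ) (f i) = (i : ℕ) := by
  unfold rk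
  have : (image f univ).filter (· < f i) = image f (univ.filter (· < i)) := by
    ext y
    simp only [mem_filter, mem_image, mem_univ, true_and]
    constructor
    · rintro ⟨⟨z, rfl⟩, hlt⟩
      exact ⟨z, hf.lt_iff_lt.1 hlt, rfl⟩
    · rintro ⟨z, hz, rfl⟩
      exact ⟨⟨z, rfl⟩, hf hz⟩
  rw [this, card_image_of_injective _ hf.injective, card_filter_lt_fin]

lemma rk_lt_card {s : Finset α} {x : α} (hx : x ∈ s) : rk s x < s.card := by
  have : s.filter (· < x) ⊂ s :=
    Finset.ssubset_iff_of_subset (filter_subset _ _) |>.2 ⟨x, hx, by simp⟩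
  exact card_lt_card this

lemma rk_strictMonoOn {s : Finset α} {x y : α} (hx : x ∈ s) (hxy : x < y) :
    rk s x < rk s y := by
  unfold rk
  refine card_lt_card (Finset.ssubset_iff_of_subset ?_ |>.2 ⟨x, by simp [hx, hxy], by simp⟩)
  intro z hz
  simp only [mem_filter] at hz ⊢
  exact ⟨hz.1, hz.2.trans hxy⟩

lemma rk_inj {s : Finset α} {x y : α} (hx : x ∈ s) (hy : y ∈ s)
    (h : rk s x = rk s y) : x = y := by
  rcases lt_trichotomy x y with h'|h'|h'
  · exact absurd h (rk_strictMonoOn hx h').ne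
  · exact h'
  · exact absurd h.symm (rk_strictMonoOn hy h').ne

lemma image_orderEmbOfFin (s : Finset α) {k : ℕ} (h : s.card = k) :
    image (s.orderEmbOfFin h) univ = s := by
  have := range_orderEmbOfFin s h
  rw [← coe_inj, coe_image, coe_univ, Set.image_univ, this]

lemma rk_orderEmbOfFin (s : Finset α) {k : ℕ} (h : s.card = k) (i : Fin k) :
    rk s (s.orderEmbOfFin h i) = (i : ℕ) := by
  have := rk_image_fin (fun j => s.orderEmbOfFin h j) (s.orderEmbOfFin h).strictMono i
  rwa [show image (fun j => s.orderEmbOfFin h j) univ = s from image_orderEmbOfFin s h] at this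

lemma orderEmbOfFin_rk {s : Finset α} {k : ℕ} (h : s.card = k) {x : α} (hx : x ∈ s) :
    s.orderEmbOfFin h ⟨rk s x, h ▸ rk_lt_card hx⟩ = x := by
  have hr : x ∈ Set.range (s.orderEmbOfFin h) := by rw [range_orderEmbOfFin]; exact hx
  obtain ⟨i, rfl⟩ := hr
  congr 1
  ext
  simp [rk_orderEmbOfFin s h i]

lemma rk_image (e : α → β) (he : StrictMono e) (s : Finset α) (x : α) :
    rk (s.image e) (e x) = rk s x := by
  unfold rk
  rw [← card_image_of_injective (s.filter (· < x)) he.injective]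
  congr 1
  ext y
  simp only [mem_filter, mem_image]
  constructor
  · rintro ⟨⟨z, hz, rfl⟩, hlt⟩
    exact ⟨z, ⟨hz, he.lt_iff_lt.1 hlt⟩, rfl⟩
  · rintro ⟨z, ⟨hz, hlt⟩, rfl⟩
    exact ⟨⟨z, hz, rfl⟩, he hlt⟩

end RankMachinery

section Types
variable {β : Type*} [LinearOrder β] {n : ℕ}

/-- the (rank-)type of a pair of `n`-tuples. -/
def TT (n : ℕ) (p q : Fin n → β) : (Fin n → ℕ) × (Fin n → ℕ) :=
  (fun j => rk (image p univ ∪ image q univ) (p j),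
   fun j => rk (image p univ ∪ image q univ) (q j))

lemma TY {k : ℕ} (Φ : Fin k → β) (hΦ : StrictMono Φ) (a b : Fin n → Fin k)
    (hcov : ∀ ρ : Fin k, (∃ j, a j = ρ) ∨ (∃ j, b j = ρ)) :
    TT n (Φ ∘ a) (Φ ∘ b) = (fun j => ((a j : ℕ)), fun j => ((b j : ℕ))) := by
  have hab : image a univ ∪ image b univ = (univ : Finset (Fin k)) := by
    ext ρ
    simp only [mem_union, mem_image, mem_univ, true_and, iff_true]
    rcases hcov ρ with ⟨j, hj⟩ | ⟨j, hj⟩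
    · exact Or.inl ⟨j, hj⟩
    · exact Or.inr ⟨j, hj⟩
  have him : image (Φ ∘ a) univ ∪ image (Φ ∘ b) univ = image Φ univ := by
    rw [show image (Φ ∘ a) univ = image Φ (image a univ) from (image_image ..).symm,
        show image (Φ ∘ b) univ = image Φ (image b univ) from (image_image ..).symm,
        ← image_union, hab]
  unfold TT
  rw [him]
  exact Prod.ext (funext fun j => rk_image_fin Φ hΦ (a j))
    (funext fun j => rk_image_fin Φ hΦ (b j))

variable {l' : ℕ}

def uSet (p q : Fin n → Fin l') : Finset (Fin l') := image p univ ∪ image q univ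

lemma mem_uSet_p (p q : Fin n → Fin l') (j : Fin n) : p j ∈ uSet p q :=
  mem_union_left _ (mem_image_of_mem p (mem_univ j))

lemma mem_uSet_q (p q : Fin n → Fin l') (j : Fin n) : q j ∈ uSet p q :=
  mem_union_right _ (mem_image_of_mem q (mem_univ j))

def kC (p q : Fin n → Fin l') : ℕ := #(uSet p q)

lemma kC_le (p q : Fin n → Fin l') : kC p q ≤ 2 * n := by
  unfold kC uSet
  calc #(image p univ ∪ image q univ) ≤ #(image p univ) + #(image q univ) := card_union_le _ _
    _ ≤ #(univ : Finset (Fin n)) + #(univ : Finset (Fin n)) :=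
        Nat.add_le_add card_image_le card_image_le
    _ = 2 * n := by rw [card_univ, Fintype.card_fin]; omega

lemma le_kC (p q : Fin n → Fin l') (hp : Function.Injective p) : n ≤ kC p q := by
  unfold kC uSet
  calc n = #(image p univ) := by rw [card_image_of_injective _ hp, card_univ, Fintype.card_fin]
    _ ≤ _ := card_le_card subset_union_left

def rp (p q : Fin n → Fin l') (j : Fin n) : Fin (kC p q) :=
  ⟨rk (uSet p q) (p j), rk_lt_card (mem_uSet_p p q j)⟩

def rq (p q : Fin n → Fin l') (j : Fin n) : Fin (kC p q) :=
  ⟨rk (uSet p q) (q j), rk_lt_card (mem_uSet_q p q j)⟩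

lemma rp_strictMono {p q : Fin n → Fin l'} (hp : StrictMono p) : StrictMono (rp p q) :=
  fun _ _ h => rk_strictMonoOn (mem_uSet_p p q _) (hp h)

lemma rq_strictMono {p q : Fin n → Fin l'} (hq : StrictMono q) : StrictMono (rq p q) :=
  fun _ _ h => rk_strictMonoOn (mem_uSet_q p q _) (hq h)

lemma cov_rpq (p q : Fin n → Fin l') (ρ : Fin (kC p q)) :
    (∃ j, rp p q j = ρ) ∨ (∃ j, rq p q j = ρ) := by
  have hx := orderEmbOfFin_mem (uSet p q) rfl ρ
  have hrk := rk_orderEmbOfFin (uSet p q) rfl ρ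
  set x := (uSet p q).orderEmbOfFin rfl ρ with hxdef
  rcases mem_union.mp hx with hm | hm
  · obtain ⟨j, _, hj⟩ := mem_image.mp hm
    refine Or.inl ⟨j, Fin.ext ?_⟩
    show rk (uSet p q) (p j) = (ρ : ℕ)
    rw [hj]; exact hrk
  · obtain ⟨j, _, hj⟩ := mem_image.mp hm
    refine Or.inr ⟨j, Fin.ext ?_⟩
    show rk (uSet p q) (q j) = (ρ : ℕ)
    rw [hj]; exact hrk

/-- the canonical reconstruction : `p` equals the enumeration of `uSet` composed with `rp`. -/
lemma p_eq_emb_rp (p q : Fin n → Fin l') :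
    p = ((uSet p q).orderEmbOfFin rfl) ∘ (rp p q) :=
  funext fun j => (orderEmbOfFin_rk rfl (mem_uSet_p p q j)).symm

lemma q_eq_emb_rq (p q : Fin n → Fin l') :
    q = ((uSet p q).orderEmbOfFin rfl) ∘ (rq p q) :=
  funext fun j => (orderEmbOfFin_rk rfl (mem_uSet_q p q j)).symm

lemma TT_eq_rpq (p q : Fin n → Fin l') :
    TT n p q = (fun j => ((rp p q j : ℕ)), fun j => ((rq p q j : ℕ))) := by
  have h := TY ((uSet p q).orderEmbOfFin rfl) ((uSet p q).orderEmbOfFin rfl).strictMono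
    (rp p q) (rq p q) (cov_rpq p q)
  rw [← p_eq_emb_rp p q, ← q_eq_emb_rq p q] at h
  exact h

/-- the size of the union is determined by the type. -/
lemma card_TT (p q : Fin n → Fin l') :
    #(image (TT n p q).1 univ ∪ image (TT n p q).2 univ) = kC p q := by
  rw [TT_eq_rpq]
  have h1 : image (fun j => ((rp p q j : ℕ))) univ = image (↑·) (image (rp p q) univ) := by
    rw [image_image]; rfl
  have h2 : image (fun j => ((rq p q j : ℕ))) univ = image (↑·) (image (rq p q) univ) := by
    rw [image_image]; rfl
  have hcov : image (rp p q) univ ∪ image (rq p q) univ = (univ : Finset (Fin (kC p q))) := by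
    ext ρ
    simp only [mem_union, mem_image, mem_univ, true_and, iff_true]
    rcases cov_rpq p q ρ with ⟨j, hj⟩ | ⟨j, hj⟩
    · exact Or.inl ⟨j, hj⟩
    · exact Or.inr ⟨j, hj⟩
  simp only [h1, h2]
  rw [← image_union, hcov, card_image_of_injective _ Fin.val_injective, card_univ,
    Fintype.card_fin]

lemma rk_congr {γ : Type*} [LinearOrder γ] {S S' : Finset γ} (x : γ) (h : S = S') :
    rk S x = rk S' x := by rw [h]

lemma TT_fst {l' : ℕ} (p q : Fin n → Fin l') (j : Fin n) :
    (TT n p q).1 j = rk (uSet p q) (p j) := by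
  refine rk_congr (γ := Fin l') (S := image p univ ∪ image q univ) _ ?_
  ext x
  simp [uSet]

lemma TT_snd {l' : ℕ} (p q : Fin n → Fin l') (j : Fin n) :
    (TT n p q).2 j = rk (uSet p q) (q j) := by
  refine rk_congr (γ := Fin l') (S := image p univ ∪ image q univ) _ ?_
  ext x
  simp [uSet]

lemma TT_comp {l' : ℕ} {γ : Type*} [LinearOrder γ] (e : Fin l' → γ) (he : StrictMono e)
    (p q : Fin n → Fin l') : TT n (e ∘ p) (e ∘ q) = TT n p q := by
  unfold TT
  have him : image (e ∘ p) univ ∪ image (e ∘ q) univ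
      = image e (image p univ ∪ image q univ) := by
    rw [image_union, image_image, image_image]
  refine Prod.ext (funext fun j => ?_) (funext fun j => ?_)
  · simp only [him, Function.comp_apply]
    have h := rk_image e he (image p univ ∪ image q univ) (p j)
    convert h using 2 <;> congr!
  · simp only [him, Function.comp_apply]
    have h := rk_image e he (image p univ ∪ image q univ) (q j)
    convert h using 2 <;> congr!

end Types

section Grid
variable {n l' : ℕ}

lemma aux_bound (hl : (n+2)*(2*n+2) < l') {v : ℕ} (hv : v ≤ 2*n - 1) (hn : 1 ≤ n) :
    (n+2)*(v+2) + n + 1 < l' := by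
  have h1 : (n+2)*(v+2) ≤ (n+2)*(2*n+1) := Nat.mul_le_mul_left _ (by omega)
  have h2 : (n+2)*(2*n+2) = (n+2)*(2*n+1) + (n+2) := by ring
  omega

/-- grid (wide-gap) realization of the first component -/
def grdF (hl : (n+2)*(2*n+2) < l') (p q : Fin n → Fin l') : Fin n → Fin l' :=
  fun j => ⟨(n+2)*((rp p q j : ℕ)+2), by
    have h1 := (rp p q j).2
    have h2 := kC_le p q
    have h3 : 1 ≤ n := by have := (rp p q j).1; have := j.2; omega
    have := aux_bound hl (v := (rp p q j : ℕ)) (by omega) h3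
    omega⟩

def grdG (hl : (n+2)*(2*n+2) < l') (p q : Fin n → Fin l') : Fin n → Fin l' :=
  fun j => ⟨(n+2)*((rq p q j : ℕ)+2), by
    have h1 := (rq p q j).2
    have h2 := kC_le p q
    have h3 : 1 ≤ n := by have := j.2; omega
    have := aux_bound hl (v := (rq p q j : ℕ)) (by omega) h3
    omega⟩

def grdPhi (hl : (n+2)*(2*n+2) < l') (p q : Fin n → Fin l') : Fin (kC p q) → Fin l' :=
  fun ρ => ⟨(n+2)*((ρ : ℕ)+2), by
    have h1 := ρ.2
    have h2 := kC_le p q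
    have h3 : 1 ≤ n := by have := ρ.2; omega
    have := aux_bound hl (v := (ρ : ℕ)) (by omega) h3
    omega⟩

lemma grdPhi_strictMono (hl : (n+2)*(2*n+2) < l') (p q : Fin n → Fin l') :
    StrictMono (grdPhi hl p q) := by
  intro a b hab
  simp only [grdPhi, Fin.mk_lt_mk]
  have : (a:ℕ) + 2 < (b:ℕ) + 2 := by omega
  exact mul_lt_mul_of_pos_left this (by omega)

lemma grdF_eq (hl : (n+2)*(2*n+2) < l') (p q : Fin n → Fin l') :
    grdF hl p q = grdPhi hl p q ∘ rp p q := rfl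

lemma grdG_eq (hl : (n+2)*(2*n+2) < l') (p q : Fin n → Fin l') :
    grdG hl p q = grdPhi hl p q ∘ rq p q := rfl

lemma grdF_strictMono (hl : (n+2)*(2*n+2) < l') {p q : Fin n → Fin l'} (hp : StrictMono p) :
    StrictMono (grdF hl p q) := by
  rw [grdF_eq]; exact (grdPhi_strictMono hl p q).comp (rp_strictMono hp)

lemma grdG_strictMono (hl : (n+2)*(2*n+2) < l') {p q : Fin n → Fin l'} (hq : StrictMono q) :
    StrictMono (grdG hl p q) := by
  rw [grdG_eq]; exact (grdPhi_strictMono hl p q).comp (rq_strictMono hq)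

lemma TT_grd (hl : (n+2)*(2*n+2) < l') (p q : Fin n → Fin l') :
    TT n (grdF hl p q) (grdG hl p q) = TT n p q := by
  rw [grdF_eq, grdG_eq, TY (grdPhi hl p q) (grdPhi_strictMono hl p q) _ _ (cov_rpq p q),
    TT_eq_rpq]

end Grid

section TypeDiff
variable {n l' : ℕ}

/-- the merged enumeration of a pair agreeing off `i` with `p i < q i`. -/
def PhiD (p q : Fin n → Fin l') (i : Fin n) : Fin (n+1) → Fin l' := fun t =>
  if h : (t:ℕ) ≤ (i:ℕ) then p ⟨t, lt_of_le_of_lt h i.isLt⟩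
  else if h2 : (t:ℕ) = (i:ℕ)+1 then q i
  else p ⟨(t:ℕ)-1, by have := t.isLt; omega⟩

def aI (i : Fin n) : Fin n → Fin (n+1) := fun j =>
  ⟨if (j:ℕ) ≤ (i:ℕ) then (j:ℕ) else (j:ℕ)+1, by have := j.isLt; split <;> omega⟩

def bI (i : Fin n) : Fin n → Fin (n+1) := fun j =>
  ⟨if (j:ℕ) < (i:ℕ) then (j:ℕ) else (j:ℕ)+1, by have := j.isLt; split <;> omega⟩

lemma PhiD_strictMono {p q : Fin n → Fin l'} {i : Fin n} (hp : StrictMono p)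
    (hq : StrictMono q) (hag : ∀ j, j ≠ i → p j = q j) (hlt : p i < q i) :
    StrictMono (PhiD p q i) := by
  intro t t' htt
  have ht' := t'.isLt
  have ht := t.isLt
  have htt' : (t:ℕ) < (t':ℕ) := htt
  unfold PhiD
  rcases Nat.lt_trichotomy (t:ℕ) ((i:ℕ)+1) with h2 | h2 | h2
  · -- t ≤ i
    rw [dif_pos (by omega : (t:ℕ) ≤ (i:ℕ))]
    rcases Nat.lt_trichotomy (t':ℕ) ((i:ℕ)+1) with h1 | h1 | h1
    · rw [dif_pos (by omega : (t':ℕ) ≤ (i:ℕ))]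
      exact hp (by simp only [Fin.lt_def]; omega)
    · rw [dif_neg (by omega), dif_pos h1]
      calc p ⟨(t:ℕ), by omega⟩ ≤ p i := by
            rcases Nat.lt_or_ge (t:ℕ) (i:ℕ) with h | h
            · exact le_of_lt (hp (by simp only [Fin.lt_def]; omega))
            · have : (⟨(t:ℕ), by omega⟩ : Fin n) = i := by
                apply Fin.ext; simp; omega
              rw [this]
        _ < q i := hlt
    · rw [dif_neg (by omega), dif_neg (by omega)]
      exact hp (by simp only [Fin.lt_def]; omega)
  · -- t = i + 1 hence t' ≥ i + 2
    rw [dif_neg (by omega), dif_pos h2, dif_neg (by omega), dif_neg (by omega)]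
    have heq : p ⟨(t':ℕ)-1, by omega⟩ = q ⟨(t':ℕ)-1, by omega⟩ := by
      apply hag
      intro hcon
      have := congrArg Fin.val hcon
      simp at this; omega
    rw [heq]
    exact hq (by simp only [Fin.lt_def]; omega)
  · -- t ≥ i + 2
    rw [dif_neg (by omega), dif_neg (by omega), dif_neg (by omega), dif_neg (by omega)]
    exact hp (by simp only [Fin.lt_def]; omega)

lemma PhiD_aI {p q : Fin n → Fin l'} {i : Fin n} :
    PhiD p q i ∘ aI i = p := by
  funext j
  dsimp only [Function.comp_apply, PhiD, aI]
  rcases le_or_gt (j:ℕ) (i:ℕ) with h | h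
  · rw [dif_pos (by simp [h])]
    congr 1; apply Fin.ext; simp [h]
  · rw [dif_neg (by rw [if_neg (by omega)]; omega), dif_neg (by rw [if_neg (by omega)]; omega)]
    congr 1; apply Fin.ext; simp; rw [if_neg (by omega)]; omega

lemma PhiD_bI {p q : Fin n → Fin l'} {i : Fin n} (hag : ∀ j, j ≠ i → p j = q j) :
    PhiD p q i ∘ bI i = q := by
  funext j
  dsimp only [Function.comp_apply, PhiD, bI]
  rcases Nat.lt_trichotomy (j:ℕ) (i:ℕ) with h | h | h
  · rw [dif_pos (by rw [if_pos h]; omega), ← hag j (fun hc => by rw [hc] at h; omega)]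
    congr 1; apply Fin.ext; simp [h]
  · have hji : j = i := Fin.ext h
    rw [dif_neg (by rw [if_neg (by omega)]; omega), dif_pos (by rw [if_neg (by omega)]; omega),
      hji]
  · rw [dif_neg (by rw [if_neg (by omega)]; omega), dif_neg (by rw [if_neg (by omega)]; omega),
      ← hag j (fun hc => by rw [hc] at h; omega)]
    congr 1; apply Fin.ext; simp; rw [if_neg (by omega)]; omega

lemma cov_aIbI (i : Fin n) (t : Fin (n+1)) :
    (∃ j, aI i j = t) ∨ (∃ j, bI i j = t) := by
  have ht := t.isLt
  rcases Nat.lt_trichotomy (t:ℕ) ((i:ℕ)+1) with h | h | h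
  · refine Or.inl ⟨⟨(t:ℕ), by have := i.isLt; omega⟩, ?_⟩
    apply Fin.ext; simp [aI]; omega
  · exact Or.inr ⟨i, by apply Fin.ext; simp [bI]; omega⟩
  · refine Or.inl ⟨⟨(t:ℕ)-1, by omega⟩, ?_⟩
    apply Fin.ext; simp [aI]; rw [if_neg (by omega)]; omega

/-- pairs that agree off `i` and increase at `i` all have the same type. -/
lemma typeDiff {p q : Fin n → Fin l'} {i : Fin n} (hp : StrictMono p) (hq : StrictMono q)
    (hag : ∀ j, j ≠ i → p j = q j) (hlt : p i < q i) :
    TT n p q = (fun j : Fin n => if (j:ℕ) ≤ (i:ℕ) then (j:ℕ) else (j:ℕ)+1,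
                fun j : Fin n => if (j:ℕ) < (i:ℕ) then (j:ℕ) else (j:ℕ)+1) := by
  have h := TY (PhiD p q i) (PhiD_strictMono hp hq hag hlt) (aI i) (bI i) (cov_aIbI i)
  rw [PhiD_aI, PhiD_bI hag] at h
  rw [h]
  exact Prod.ext (funext fun j => rfl) (funext fun j => rfl)

end TypeDiff

section Phi1
variable {n l' : ℕ}

open Classical in
noncomputable def fv (p q : Fin n → Fin l') (ρ : Fin (kC p q)) : ℕ :=
  if h : ∃ j, rp p q j = ρ then (n+2)*((rq p q h.choose : ℕ)+2) else 0

lemma fv_eq {p q : Fin n → Fin l'} (hp : StrictMono p) {ρ : Fin (kC p q)} {j : Fin n}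
    (hj : rp p q j = ρ) : fv p q ρ = (n+2)*((rq p q j : ℕ)+2) := by
  have h : ∃ j, rp p q j = ρ := ⟨j, hj⟩
  rw [fv, dif_pos h]
  have : h.choose = j := (rp_strictMono hp).injective (by rw [h.choose_spec, hj])
  rw [this]

open Classical in
noncomputable def FrS (p q : Fin n → Fin l') : Finset (Fin (kC p q)) :=
  univ.filter (fun ρ => ∃ j, rp p q j = ρ)

lemma mem_FrS {p q : Fin n → Fin l'} {ρ : Fin (kC p q)} :
    ρ ∈ FrS p q ↔ ∃ j, rp p q j = ρ := by
  unfold FrS; simp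

lemma FrS_eq (p q : Fin n → Fin l') : FrS p q = image (rp p q) univ := by
  ext ρ; rw [mem_FrS]; simp [eq_comm]

lemma card_FrS {p q : Fin n → Fin l'} (hp : StrictMono p) : #(FrS p q) = n := by
  rw [FrS_eq, card_image_of_injective _ (rp_strictMono hp).injective, card_univ,
    Fintype.card_fin]

noncomputable def blF (p q : Fin n → Fin l') (ρ : Fin (kC p q)) : ℕ :=
  if h : ((FrS p q).filter (· < ρ)).Nonempty then fv p q (((FrS p q).filter (· < ρ)).max' h)
  else 0

open Classical in
noncomputable def cntF (p q : Fin n → Fin l') (ρ : Fin (kC p q)) : Finset (Fin (kC p q)) :=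
  univ.filter (fun ρ' => ρ' ∉ FrS p q ∧ ρ' < ρ ∧ ∀ σ ∈ FrS p q, σ < ρ → σ < ρ')

noncomputable def Phi1val (p q : Fin n → Fin l') (ρ : Fin (kC p q)) : ℕ :=
  if ρ ∈ FrS p q then fv p q ρ else blF p q ρ + 1 + #(cntF p q ρ)

-- basic facts
lemma fv_mono_strict {p q : Fin n → Fin l'} (hp : StrictMono p) (hq : StrictMono q)
    {ρ ρ' : Fin (kC p q)} (h : ρ ∈ FrS p q) (h' : ρ' ∈ FrS p q) (hlt : ρ < ρ') :
    fv p q ρ + (n+2) ≤ fv p q ρ' := by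
  obtain ⟨j, hj⟩ := mem_FrS.mp h
  obtain ⟨j', hj'⟩ := mem_FrS.mp h'
  rw [fv_eq hp hj, fv_eq hp hj']
  have hjj : j < j' := by
    refine ((rp_strictMono (q := q) hp).lt_iff_lt).mp ?_
    rw [hj, hj']; exact hlt
  have hrq : (rq p q j : ℕ) < (rq p q j' : ℕ) := rq_strictMono hq hjj
  calc (n+2)*((rq p q j : ℕ)+2) + (n+2) = (n+2)*((rq p q j : ℕ)+3) := by ring
    _ ≤ (n+2)*((rq p q j' : ℕ)+2) := Nat.mul_le_mul_left _ (by omega)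

lemma fv_mono {p q : Fin n → Fin l'} (hp : StrictMono p) (hq : StrictMono q)
    {ρ ρ' : Fin (kC p q)} (h : ρ ∈ FrS p q) (h' : ρ' ∈ FrS p q) (hle : ρ ≤ ρ') :
    fv p q ρ ≤ fv p q ρ' := by
  rcases eq_or_lt_of_le hle with rfl | hlt
  · exact le_refl _
  · have := fv_mono_strict hp hq h h' hlt; omega

lemma fv_lower {p q : Fin n → Fin l'} (hp : StrictMono p) {ρ : Fin (kC p q)}
    (h : ρ ∈ FrS p q) : 2*(n+2) ≤ fv p q ρ := by
  obtain ⟨j, hj⟩ := mem_FrS.mp h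
  rw [fv_eq hp hj]
  calc 2*(n+2) = (n+2)*2 := by ring
    _ ≤ (n+2)*((rq p q j : ℕ)+2) := Nat.mul_le_mul_left _ (by omega)

lemma fv_upper {p q : Fin n → Fin l'} (hp : StrictMono p) {ρ : Fin (kC p q)} :
    fv p q ρ ≤ (n+2)*(2*n+1) := by
  by_cases h : ∃ j, rp p q j = ρ
  · obtain ⟨j, hj⟩ := h
    rw [fv_eq hp hj]
    have h1 := (rq p q j).2
    have h2 := kC_le p q
    exact Nat.mul_le_mul_left _ (by omega)
  · rw [fv, dif_neg h]; omega

lemma fv_multiple (p q : Fin n → Fin l') (ρ : Fin (kC p q)) : ∃ c, fv p q ρ = (n+2)*c := by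
  unfold fv
  split
  · exact ⟨_, rfl⟩
  · exact ⟨0, by omega⟩

lemma blF_multiple (p q : Fin n → Fin l') (ρ : Fin (kC p q)) : ∃ c, blF p q ρ = (n+2)*c := by
  unfold blF
  split
  · exact fv_multiple p q _
  · exact ⟨0, by omega⟩

lemma cntF_le {p q : Fin n → Fin l'} (hp : StrictMono p) (ρ : Fin (kC p q)) :
    #(cntF p q ρ) ≤ n := by
  classical
  have hsub : cntF p q ρ ⊆ univ.filter (fun ρ' => ρ' ∉ FrS p q) := by
    intro ρ' h
    simp only [cntF, mem_filter] at h ⊢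
    exact ⟨mem_univ _, h.2.1⟩
  have h1 : #(univ.filter (fun ρ' : Fin (kC p q) => ρ' ∉ FrS p q)) = kC p q - n := by
    have h2 := card_filter_add_card_filter_not
      (s := (univ : Finset (Fin (kC p q)))) (p := fun ρ' => ρ' ∈ FrS p q)
    have h3 : univ.filter (fun ρ' : Fin (kC p q) => ρ' ∈ FrS p q) = FrS p q := by
      ext σ; simp [FrS]
    rw [h3, card_FrS hp, card_univ, Fintype.card_fin] at h2
    omega
  have := card_le_card hsub
  rw [h1] at this
  have := kC_le p q
  omega

lemma blF_upper {p q : Fin n → Fin l'} (hp : StrictMono p) (ρ : Fin (kC p q)) :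
    blF p q ρ ≤ (n+2)*(2*n+1) := by
  unfold blF
  split
  · exact fv_upper hp
  · omega

lemma Phi1val_lt (hl : (n+2)*(2*n+2) < l') {p q : Fin n → Fin l'} (hp : StrictMono p)
    (ρ : Fin (kC p q)) : Phi1val p q ρ < l' := by
  have hn : 1 ≤ n := by
    have h1 := ρ.2
    have h2 := kC_le p q
    omega
  have key : (n+2)*(2*n+1) + n + 1 < l' := by
    have := aux_bound hl (v := 2*n-1) (le_refl _) hn
    have heq : 2*n-1+2 = 2*n+1 := by omega
    rw [heq] at this
    exact this
  unfold Phi1val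
  split
  · have := fv_upper hp (ρ := ρ); omega
  · have h1 := blF_upper hp (p := p) (q := q) ρ
    have h2 := cntF_le hp ρ
    omega

noncomputable def Phi1 (hl : (n+2)*(2*n+2) < l') {p : Fin n → Fin l'}
    (q : Fin n → Fin l') (hp : StrictMono p) : Fin (kC p q) → Fin l' :=
  fun ρ => ⟨Phi1val p q ρ, Phi1val_lt hl hp ρ⟩

lemma blF_ge_fv {p q : Fin n → Fin l'} (hp : StrictMono p) (hq : StrictMono q)
    {σ ρ : Fin (kC p q)} (hσ : σ ∈ FrS p q) (hlt : σ < ρ) :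
    fv p q σ ≤ blF p q ρ := by
  have hne : ((FrS p q).filter (· < ρ)).Nonempty := ⟨σ, mem_filter.mpr ⟨hσ, hlt⟩⟩
  rw [blF, dif_pos hne]
  have hmem := ((FrS p q).filter (· < ρ)).max'_mem hne
  have hmax := ((FrS p q).filter (· < ρ)).le_max' σ (mem_filter.mpr ⟨hσ, hlt⟩)
  exact fv_mono hp hq hσ (mem_filter.mp hmem).1 hmax

/-- key : value of a free rank is strictly below value of any later forced rank -/
lemma free_lt_forced {p q : Fin n → Fin l'} (hp : StrictMono p) (hq : StrictMono q)
    {ρ σ : Fin (kC p q)} (hρ : ρ ∉ FrS p q) (hσ : σ ∈ FrS p q) (hlt : ρ < σ) :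
    blF p q ρ + 1 + #(cntF p q ρ) < fv p q σ := by
  have hcnt := cntF_le hp ρ
  by_cases hne : ((FrS p q).filter (· < ρ)).Nonempty
  · rw [blF, dif_pos hne]
    set m := ((FrS p q).filter (· < ρ)).max' hne with hm
    have hmem := ((FrS p q).filter (· < ρ)).max'_mem hne
    rw [← hm] at hmem
    have hmF : m ∈ FrS p q := (mem_filter.mp hmem).1
    have hmρ : m < ρ := (mem_filter.mp hmem).2
    have := fv_mono_strict hp hq hmF hσ (lt_trans hmρ hlt)
    omega
  · rw [blF, dif_neg hne]
    have := fv_lower hp hσ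
    omega

lemma Phi1_strictMono (hl : (n+2)*(2*n+2) < l') {p q : Fin n → Fin l'}
    (hp : StrictMono p) (hq : StrictMono q) : StrictMono (Phi1 hl q hp) := by
  intro ρ ρ' hlt
  simp only [Phi1, Fin.mk_lt_mk]
  by_cases h1 : ρ ∈ FrS p q <;> by_cases h2 : ρ' ∈ FrS p q
  · -- forced / forced
    rw [Phi1val, if_pos h1, Phi1val, if_pos h2]
    have := fv_mono_strict hp hq h1 h2 hlt
    omega
  · -- forced / free
    rw [Phi1val, if_pos h1, Phi1val, if_neg h2]
    have := blF_ge_fv hp hq h1 hlt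
    omega
  · -- free / forced
    rw [Phi1val, if_neg h1, Phi1val, if_pos h2]
    exact free_lt_forced hp hq h1 h2 hlt
  · -- free / free
    rw [Phi1val, if_neg h1, Phi1val, if_neg h2]
    by_cases hb : ∀ σ ∈ FrS p q, σ < ρ' → σ < ρ
    · -- same forced sets below : counts grow
      have hbl : blF p q ρ = blF p q ρ' := by
        have hset : (FrS p q).filter (· < ρ) = (FrS p q).filter (· < ρ') := by
          ext σ
          simp only [mem_filter]
          exact ⟨fun ⟨a, b⟩ => ⟨a, lt_trans b hlt⟩, fun ⟨a, b⟩ => ⟨a, hb σ a b⟩⟩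
        rw [blF, blF, hset]
      have hcnt : #(cntF p q ρ) < #(cntF p q ρ') := by
        refine card_lt_card ⟨?_, ?_⟩
        · intro σ'' hσ''
          simp only [cntF, mem_filter] at hσ'' ⊢
          obtain ⟨-, hfree, hlt'', hcond⟩ := hσ''
          exact ⟨mem_univ _, hfree, lt_trans hlt'' hlt,
            fun σ hσF hσρ' => hcond σ hσF (hb σ hσF hσρ')⟩
        · intro hsub
          have hρmem : ρ ∈ cntF p q ρ' := by
            simp only [cntF, mem_filter]
            exact ⟨mem_univ _, h1, hlt, fun σ hσF hσρ' => hb σ hσF hσρ'⟩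
          have := hsub hρmem
          simp only [cntF, mem_filter] at this
          exact absurd this.2.2.1 (lt_irrefl ρ)
      omega
    · -- a forced rank lies in between
      push_neg at hb
      obtain ⟨σ, hσF, hσρ', hσρ⟩ := hb
      have hρσ : ρ < σ := by
        rcases eq_or_lt_of_le hσρ with h | h
        · exact absurd (by rw [h]; exact hσF) h1
        · exact h
      have hA : blF p q ρ + 1 + #(cntF p q ρ) < fv p q σ :=
        free_lt_forced hp hq h1 hσF hρσ
      have hB : fv p q σ ≤ blF p q ρ' := blF_ge_fv hp hq hσF hσρ'
      omega

lemma Phi1_rp (hl : (n+2)*(2*n+2) < l') {p q : Fin n → Fin l'}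
    (hp : StrictMono p) (j : Fin n) :
    Phi1 hl q hp (rp p q j) = grdG hl p q j := by
  apply Fin.ext
  show Phi1val p q (rp p q j) = (n+2)*((rq p q j : ℕ)+2)
  rw [Phi1val, if_pos (mem_FrS.mpr ⟨j, rfl⟩), fv_eq hp rfl]

lemma TT_p1p2 (hl : (n+2)*(2*n+2) < l') {p q : Fin n → Fin l'}
    (hp : StrictMono p) (hq : StrictMono q) :
    TT n (grdG hl p q) (Phi1 hl q hp ∘ rq p q) = TT n p q := by
  have he : grdG hl p q = Phi1 hl q hp ∘ rp p q := funext fun j => (Phi1_rp hl hp j).symm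
  rw [he, TY (Phi1 hl q hp) (Phi1_strictMono hl hp hq) _ _ (cov_rpq p q), TT_eq_rpq]

/-- the only coincidences between the grid realization of `p` and the successor copy
are those forced by a two-step sharing chain. -/
lemma sharing (hl : (n+2)*(2*n+2) < l') {p q : Fin n → Fin l'}
    (hp : StrictMono p) (hq : StrictMono q) (i' j₂ : Fin n)
    (heq : grdF hl p q i' = Phi1 hl q hp (rq p q j₂)) :
    ∃ j₁, p i' = q j₁ ∧ p j₁ = q j₂ := by
  have hval : (n+2)*((rp p q i' : ℕ)+2) = Phi1val p q (rq p q j₂) := congrArg Fin.val heq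
  by_cases hF : rq p q j₂ ∈ FrS p q
  · obtain ⟨j₁, hj₁⟩ := mem_FrS.mp hF
    rw [Phi1val, if_pos hF, fv_eq hp hj₁] at hval
    have h2 : (rp p q i' : ℕ) = (rq p q j₁ : ℕ) := by
      have := Nat.eq_of_mul_eq_mul_left (show 0 < n+2 by omega) hval
      omega
    refine ⟨j₁, ?_, ?_⟩
    · exact rk_inj (mem_uSet_p p q i') (mem_uSet_q p q j₁) h2
    · exact rk_inj (mem_uSet_p p q j₁) (mem_uSet_q p q j₂) (congrArg Fin.val hj₁)
  · rw [Phi1val, if_neg hF] at hval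
    obtain ⟨c, hc⟩ := blF_multiple p q (rq p q j₂)
    rw [hc] at hval
    have hcnt := cntF_le hp (rq p q j₂)
    have hmod : ((n+2)*((rp p q i' : ℕ)+2)) % (n+2) = 0 := Nat.mul_mod_right _ _
    have hmod2 : ((n+2)*c + 1 + #(cntF p q (rq p q j₂))) % (n+2)
        = (1 + #(cntF p q (rq p q j₂))) % (n+2) := by
      rw [Nat.add_assoc, Nat.mul_add_mod]
    rw [hval, hmod2, Nat.mod_eq_of_lt (by omega)] at hmod
    omega

lemma no2cycle {p q : Fin n → Fin l'} (hp : StrictMono p) (hq : StrictMono q)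
    {i j : Fin n} (hne : p i ≠ q i) (h1 : p i = q j) (h2 : p j = q i) : False := by
  rcases lt_trichotomy i j with h | h | h
  · have ha : p i < p j := hp h
    have hb : q i < q j := hq h
    rw [h2] at ha
    rw [← h1] at hb
    exact lt_irrefl _ (lt_trans ha hb)
  · exact hne (h ▸ h1)
  · have ha : p j < p i := hp h
    have hb : q j < q i := hq h
    rw [h2] at ha
    rw [← h1] at hb
    exact lt_irrefl _ (lt_trans hb ha)

lemma differ_at (hl : (n+2)*(2*n+2) < l') {p q : Fin n → Fin l'}
    (hp : StrictMono p) (hq : StrictMono q) {i : Fin n} (hne : p i ≠ q i) :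
    grdF hl p q i ≠ Phi1 hl q hp (rq p q i) := by
  intro heq
  obtain ⟨j₁, h1, h2⟩ := sharing hl hp hq i i heq
  exact no2cycle hp hq hne h1 h2

end Phi1

section Dies
variable {n l' : ℕ}

def Dies (p q : Fin n → Fin l') : ℕ → Fin n → Prop
  | 0, i => ∀ j, p i ≠ q j
  | (d+1), i => ∀ j, p i = q j → Dies p q d j

lemma Dies_mono {p q : Fin n → Fin l'} : ∀ d i, Dies p q d i → Dies p q (d+1) i
  | 0, _, h => fun j hj => absurd hj (h j)
  | (d+1), _, h => fun j hj => Dies_mono d j (h j hj)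

lemma Dies_transfer (hl : (n+2)*(2*n+2) < l') {p q : Fin n → Fin l'}
    (hp : StrictMono p) (hq : StrictMono q) :
    ∀ d i', Dies p q (d+1) i' →
      Dies (grdF hl p q) (Phi1 hl q hp ∘ rq p q) d i' := by
  intro d
  induction d with
  | zero =>
    intro i' hD j₂ heq
    obtain ⟨j₁, h1, h2⟩ := sharing hl hp hq i' j₂ heq
    exact (hD j₁ h1) j₂ h2
  | succ d IH =>
    intro i' hD j₂ heq
    obtain ⟨j₁, h1, h2⟩ := sharing hl hp hq i' j₂ heq
    have hd : Dies p q d j₂ := (hD j₁ h1) j₂ h2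
    exact IH j₂ (Dies_mono d j₂ hd)

end Dies

section DiesAll
variable {n l' : ℕ}

open Classical in
/-- the partial sharing map : `F i = some j` iff `p i = q j`. -/
noncomputable def shF (p q : Fin n → Fin l') (i : Fin n) : Option (Fin n) :=
  if h : ∃ j, q j = p i then some h.choose else none

lemma shF_spec {p q : Fin n → Fin l'} {i j : Fin n} (h : shF p q i = some j) :
    q j = p i := by
  unfold shF at h
  split at h
  · rename_i hex
    cases h
    exact hex.choose_spec
  · cases h

lemma shF_total {p q : Fin n → Fin l'} {i j : Fin n} (h : q j = p i) :
    shF p q i = some ((⟨j, h⟩ : ∃ j, q j = p i).choose) := by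
  unfold shF
  rw [dif_pos ⟨j, h⟩]

lemma shF_some_of {p q : Fin n → Fin l'} {i j : Fin n} (hq : StrictMono q)
    (h : q j = p i) : shF p q i = some j := by
  rw [shF_total h]
  congr 1
  exact hq.injective ((⟨j, h⟩ : ∃ j, q j = p i).choose_spec.trans h.symm)

lemma shF_inj {p q : Fin n → Fin l'} (hp : StrictMono p) {a b j : Fin n}
    (ha : shF p q a = some j) (hb : shF p q b = some j) : a = b :=
  hp.injective ((shF_spec ha).symm.trans (shF_spec hb))

lemma shF_mono {p q : Fin n → Fin l'} (hp : StrictMono p) (hq : StrictMono q)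
    {a b a' b' : Fin n} (ha : shF p q a = some a') (hb : shF p q b = some b')
    (hab : a < b) : a' < b' := by
  have h1 : q a' = p a := shF_spec ha
  have h2 : q b' = p b := shF_spec hb
  have : q a' < q b' := by rw [h1, h2]; exact hp hab
  exact hq.lt_iff_lt.mp this

/-- iterate of the sharing map -/
noncomputable def itF (p q : Fin n → Fin l') (x : Fin n) : ℕ → Option (Fin n)
  | 0 => some x
  | (t+1) => (itF p q x t).bind (shF p q)

lemma itF_shift (p q : Fin n → Fin l') (x : Fin n) :
    ∀ t, itF p q x (t+1) = (shF p q x).bind (fun y => itF p q y t) := by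
  intro t
  induction t with
  | zero =>
    show (some x).bind (shF p q) = _
    cases h : shF p q x <;> simp [h, itF]
  | succ t IH =>
    show (itF p q x (t+1)).bind (shF p q) = _
    rw [IH]
    cases h : shF p q x <;> simp [h, itF]

lemma itF_none_mono (p q : Fin n → Fin l') (x : Fin n) {t t' : ℕ}
    (h : itF p q x t = none) (htt : t ≤ t') : itF p q x t' = none := by
  induction t' with
  | zero =>
    have : t = 0 := by omega
    rw [← this]; exact h
  | succ t' IH =>
    rcases Nat.lt_or_ge t (t'+1) with hlt | hge
    · show (itF p q x t').bind (shF p q) = none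
      rw [IH (by omega)]
      rfl
    · have : t = t'+1 := by omega
      rw [← this]; exact h

lemma dies_of_itF_none {p q : Fin n → Fin l'} (hq : StrictMono q) :
    ∀ d (x : Fin n), itF p q x (d+1) = none → Dies p q d x := by
  intro d
  induction d with
  | zero =>
    intro x h j hpj
    show False
    have : itF p q x 1 = shF p q x := by
      show (some x).bind (shF p q) = _
      rfl
    rw [this] at h
    rw [shF_some_of hq hpj.symm] at h
    cases h
  | succ d IH =>
    intro x h j hpj
    have hs : shF p q x = some j := shF_some_of hq hpj.symm
    rw [itF_shift, hs] at h
    exact IH j h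

lemma diesAll {p q : Fin n → Fin l'} (hp : StrictMono p) (hq : StrictMono q)
    {i : Fin n} (hne : p i ≠ q i) : Dies p q n i := by
  -- it suffices to find t ≤ n with itF p q i t = none
  suffices hsuff : ∃ t ≤ n, itF p q i t = none by
    obtain ⟨t, ht, hnone⟩ := hsuff
    exact dies_of_itF_none hq n i (itF_none_mono p q i hnone (by omega))
  by_contra hall
  push_neg at hall
  -- so the orbit is total up to n; extract the actual sequence
  have hsome : ∀ t, t ≤ n → ∃ y, itF p q i t = some y := by
    intro t ht
    cases h : itF p q i t with
    | none => exact absurd h (hall t ht)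
    | some y => exact ⟨y, rfl⟩
  classical
  set x : ℕ → Fin n := fun t => (itF p q i t).getD i with hx
  have hxs : ∀ t, t ≤ n → itF p q i t = some (x t) := by
    intro t ht
    obtain ⟨y, hy⟩ := hsome t ht
    rw [hx]; simp [hy]
  have hstep : ∀ t, t < n → shF p q (x t) = some (x (t+1)) := by
    intro t ht
    have h1 := hxs t (by omega)
    have h2 := hxs (t+1) (by omega)
    have h3 : itF p q i (t+1) = (itF p q i t).bind (shF p q) := rfl
    rw [h1] at h3
    simp at h3
    rw [h3] at h2
    exact h2
  have hn1 : 1 ≤ n := by have := i.2; omega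
  -- pigeonhole : a repeat in the orbit
  obtain ⟨a, b, hab, heq⟩ := Fintype.exists_ne_map_eq_of_card_lt
    (fun t : Fin (n+1) => x (t : ℕ)) (by simp)
  -- wlog a < b
  obtain ⟨s, t, hst, hstn, hxst⟩ : ∃ s t : ℕ, s < t ∧ t ≤ n ∧ x s = x t := by
    rcases lt_or_gt_of_ne hab with h | h
    · exact ⟨a, b, h, by omega, heq⟩
    · exact ⟨b, a, h, by omega, heq.symm⟩
  -- cancel forward steps
  have cancel : ∀ c s t : ℕ, s + c ≤ n → t + c ≤ n → x (s+c) = x (t+c) → x s = x t := by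
    intro c
    induction c with
    | zero => intro s t _ _ h; simpa using h
    | succ c IH =>
      intro s t hs ht h
      have h1 : shF p q (x (s+c)) = some (x (s+c+1)) := hstep (s+c) (by omega)
      have h2 : shF p q (x (t+c)) = some (x (t+c+1)) := hstep (t+c) (by omega)
      have hsh2 : x (s+c+1) = x (t+c+1) := by
        rw [show s+c+1 = s+(c+1) by omega, show t+c+1 = t+(c+1) by omega]; exact h
      rw [hsh2] at h1
      exact IH s t (by omega) (by omega) (shF_inj hp h1 h2)
  set c₀ := t - s with hc₀
  have hc₀1 : 1 ≤ c₀ := by omega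
  have hc₀n : c₀ ≤ n := by omega
  have hcyc : x 0 = x c₀ := by
    refine cancel s 0 c₀ (by omega) (by omega) ?_
    rw [show 0+s = s by omega, show c₀+s = t by omega]
    exact hxst
  -- periodicity
  have hper : ∀ u, u + c₀ ≤ n → x (u + c₀) = x u := by
    intro u
    induction u with
    | zero => intro _; rw [show 0 + c₀ = c₀ by omega]; exact hcyc.symm
    | succ u IH =>
      intro hu
      have h1 : shF p q (x u) = some (x (u+1)) := hstep u (by omega)
      have h2 : shF p q (x (u+c₀)) = some (x (u+c₀+1)) := hstep (u+c₀) (by omega)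
      rw [IH (by omega), h1] at h2
      have : x (u+c₀+1) = x (u+1) := by
        injection h2 with h2'
        exact h2'.symm
      rw [show u+1+c₀ = u+c₀+1 by omega]
      exact this
  -- the orbit and its minimum
  set O : Finset (Fin n) := (Finset.range c₀).image x with hO
  have hOne : O.Nonempty := by
    refine ⟨x 0, ?_⟩
    rw [hO]
    exact mem_image_of_mem x (Finset.mem_range.mpr (by omega))
  set μ := O.min' hOne with hμ
  obtain ⟨s₀, hs₀r, hs₀⟩ : ∃ s₀, s₀ ∈ Finset.range c₀ ∧ x s₀ = μ := by
    obtain ⟨s₀, h1, h2⟩ := mem_image.mp (O.min'_mem hOne)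
    exact ⟨s₀, h1, h2⟩
  have hs₀c : s₀ < c₀ := Finset.mem_range.mp hs₀r
  -- successor of μ stays in the orbit
  have hsucc : ∃ ν, shF p q μ = some ν ∧ ν ∈ O := by
    refine ⟨x (s₀+1), ?_, ?_⟩
    · rw [← hs₀]
      exact hstep s₀ (by omega)
    · rcases Nat.lt_or_ge (s₀+1) c₀ with h | h
      · rw [hO]; exact mem_image_of_mem x (Finset.mem_range.mpr h)
      · have hseq : s₀ + 1 = c₀ := by omega
        have : x (s₀+1) = x 0 := by rw [hseq]; exact hcyc.symm
        rw [this, hO]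
        exact mem_image_of_mem x (Finset.mem_range.mpr (by omega))
  -- predecessor of μ lies in the orbit
  have hpred : ∃ ω ∈ O, shF p q ω = some μ := by
    rcases Nat.lt_or_ge 0 s₀ with h | h
    · refine ⟨x (s₀-1), ?_, ?_⟩
      · rw [hO]; exact mem_image_of_mem x (Finset.mem_range.mpr (by omega))
      · have := hstep (s₀-1) (by omega)
        rw [show s₀-1+1 = s₀ by omega, hs₀] at this
        exact this
    · have hs00 : s₀ = 0 := by omega
      refine ⟨x (c₀-1), ?_, ?_⟩
      · rw [hO]; exact mem_image_of_mem x (Finset.mem_range.mpr (by omega))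
      · have := hstep (c₀-1) (by omega)
        rw [show c₀-1+1 = c₀ by omega, ← hcyc] at this
        rw [this]
        congr 1
        rw [← hs₀, hs00]
  obtain ⟨ν, hν, hνO⟩ := hsucc
  obtain ⟨ω, hωO, hω⟩ := hpred
  -- μ is a fixed point of the sharing map
  have hfix : shF p q μ = some μ := by
    by_cases hωμ : ω = μ
    · rw [hωμ] at hω; exact hω
    · exfalso
      have hμω : μ < ω := lt_of_le_of_ne (O.min'_le ω hωO) (Ne.symm hωμ)
      have : ν < μ := shF_mono hp hq hν hω hμω
      exact absurd (O.min'_le ν hνO) (not_le.mpr this)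
  -- descend back to the start
  have hdesc : ∀ s, s ≤ n → x s = μ → x 0 = μ := by
    intro s
    induction s with
    | zero => intro _ h; exact h
    | succ s IH =>
      intro hs h
      have h1 : shF p q (x s) = some (x (s+1)) := hstep s (by omega)
      rw [h] at h1
      exact IH (by omega) (shF_inj hp h1 hfix)
  have hx0 : x 0 = i := rfl
  have : i = μ := by rw [← hx0]; exact hdesc s₀ (by omega) hs₀
  rw [this] at hne
  exact hne (shF_spec hfix).symm

end DiesAll

section Core
variable {n l' : ℕ}

def fI (hl : (n+2)*(2*n+2) < l') (i : Fin n) : Fin n → Fin l' := fun j =>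
  ⟨if (j:ℕ) ≤ (i:ℕ) then (j:ℕ) else (j:ℕ)+1, by
    have h1 := j.isLt
    have h2 : n+1 ≤ (n+2)*(2*n+2) := by nlinarith
    split <;> omega⟩

def gI (hl : (n+2)*(2*n+2) < l') (i : Fin n) : Fin n → Fin l' := fun j =>
  ⟨if (j:ℕ) < (i:ℕ) then (j:ℕ) else (j:ℕ)+1, by
    have h1 := j.isLt
    have h2 : n+1 ≤ (n+2)*(2*n+2) := by nlinarith
    split <;> omega⟩

lemma fI_strictMono (hl : (n+2)*(2*n+2) < l') (i : Fin n) : StrictMono (fI hl i) := by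
  intro a b hab
  have : (a:ℕ) < (b:ℕ) := hab
  simp only [fI, Fin.mk_lt_mk]
  split <;> split <;> omega

lemma gI_strictMono (hl : (n+2)*(2*n+2) < l') (i : Fin n) : StrictMono (gI hl i) := by
  intro a b hab
  have : (a:ℕ) < (b:ℕ) := hab
  simp only [gI, Fin.mk_lt_mk]
  split <;> split <;> omega

lemma fI_agree (hl : (n+2)*(2*n+2) < l') (i : Fin n) :
    ∀ j, j ≠ i → fI hl i j = gI hl i j := by
  intro j hj
  have hne : (j:ℕ) ≠ (i:ℕ) := fun h => hj (Fin.ext h)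
  apply Fin.ext
  simp only [fI, gI]
  rcases Nat.lt_or_ge (j:ℕ) (i:ℕ) with h | h
  · rw [if_pos (by omega), if_pos h]
  · rw [if_neg (by omega), if_neg (by omega)]

lemma fI_lt (hl : (n+2)*(2*n+2) < l') (i : Fin n) : fI hl i i < gI hl i i := by
  show (⟨_, _⟩ : Fin l') < ⟨_, _⟩
  simp only [fI, gI, Fin.mk_lt_mk]
  rw [if_pos (le_refl _), if_neg (lt_irrefl _)]
  omega

lemma updStrict {N M : ℕ} {p : Fin N → Fin M} (hp : StrictMono p) (i : Fin N) (v : Fin M)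
    (hlo : ∀ j, j < i → p j < v) (hhi : ∀ j, i < j → v < p j) :
    StrictMono (Function.update p i v) := by
  intro a b hab
  rcases eq_or_ne a i with rfl | ha
  · rw [Function.update_self, Function.update_of_ne (by intro h; subst h; exact lt_irrefl _ hab)]
    exact hhi b hab
  · rcases eq_or_ne b i with rfl | hb
    · rw [Function.update_self, Function.update_of_ne ha]
      exact hlo a hab
    · rw [Function.update_of_ne ha, Function.update_of_ne hb]
      exact hp hab

theorem core (hl : (n+2)*(2*n+2) < l')
    (R : (Fin n → Fin l') → (Fin n → Fin l') → Prop)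
    (Rrefl : ∀ p, StrictMono p → R p p)
    (Rsymm : ∀ p q, StrictMono p → StrictMono q → R p q → R q p)
    (Rtrans : ∀ p q r, StrictMono p → StrictMono q → StrictMono r →
      R p q → R q r → R p r)
    (Rinv : ∀ p q p' q', StrictMono p → StrictMono q → StrictMono p' → StrictMono q' →
      TT n p q = TT n p' q' → (R p q ↔ R p' q')) :
    ∃ I : Set (Fin n), ∀ p q, StrictMono p → StrictMono q →
      (R p q ↔ ∀ i ∈ I, p i = q i) := by
  classical
  set I : Set (Fin n) := {i | ¬ R (fI hl i) (gI hl i)} with hI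
  have hInot : ∀ i : Fin n, i ∉ I ↔ R (fI hl i) (gI hl i) := by
    intro i
    rw [hI]
    simp [Set.mem_setOf_eq]
  -- one-step lemma
  have onestep : ∀ p q, StrictMono p → StrictMono q → ∀ i : Fin n,
      (∀ j, j ≠ i → p j = q j) → p i ≠ q i → (R p q ↔ i ∉ I) := by
    intro p q hp hq i hag hne
    rcases lt_or_gt_of_ne hne with hlt | hlt
    · have h1 := typeDiff hp hq hag hlt
      have h2 := typeDiff (fI_strictMono hl i) (gI_strictMono hl i) (fI_agree hl i) (fI_lt hl i)
      have hiff := Rinv p q (fI hl i) (gI hl i) hp hq (fI_strictMono hl i) (gI_strictMono hl i)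
        (h1.trans h2.symm)
      rw [hiff, hInot]
    · have hag' : ∀ j, j ≠ i → q j = p j := fun j hj => (hag j hj).symm
      have h1 := typeDiff hq hp hag' hlt
      have h2 := typeDiff (fI_strictMono hl i) (gI_strictMono hl i) (fI_agree hl i) (fI_lt hl i)
      have hiff := Rinv q p (fI hl i) (gI hl i) hq hp (fI_strictMono hl i) (gI_strictMono hl i)
        (h1.trans h2.symm)
      have hsy : R p q ↔ R q p := ⟨Rsymm p q hp hq, Rsymm q p hq hp⟩
      rw [hsy, hiff, hInot]
  -- backward direction
  have back : ∀ d (p q : Fin n → Fin l'), StrictMono p → StrictMono q →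
      (∀ i ∈ I, p i = q i) → #(univ.filter fun j => p j ≠ q j) = d → R p q := by
    intro d
    induction d with
    | zero =>
      intro p q hp hq hag hcard
      have hpq : p = q := by
        funext j
        by_contra hne'
        have : j ∈ univ.filter fun j => p j ≠ q j := mem_filter.mpr ⟨mem_univ _, hne'⟩
        rw [card_eq_zero.mp hcard] at this
        exact absurd this (notMem_empty _)
      rw [hpq]
      exact Rrefl q hq
    | succ d IH =>
      intro p q hp hq hag hcard
      set D := univ.filter fun j => p j ≠ q j with hD
      have hDne : D.Nonempty := card_pos.mp (by omega)
      set i := D.max' hDne with hi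
      have hiD : i ∈ D := D.max'_mem hDne
      have hipq : p i ≠ q i := (mem_filter.mp hiD).2
      have hiI : i ∉ I := fun h => hipq (hag i h)
      have htop : ∀ j, i < j → p j = q j := by
        intro j hj
        by_contra hne'
        have : j ∈ D := mem_filter.mpr ⟨mem_univ _, hne'⟩
        exact absurd hj (not_lt.mpr (D.le_max' j this))
      rcases lt_or_gt_of_ne hipq with hc | hc
      · set p' := Function.update p i (q i) with hp'def
        have hp' : StrictMono p' :=
          updStrict hp i (q i) (fun j hj => lt_trans (hp hj) hc)
            (fun j hj => by rw [htop j hj]; exact hq hj)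
        have hpp' : R p p' := by
          refine (onestep p p' hp hp' i (fun j hj => (Function.update_of_ne hj _ _).symm)
            ?_).mpr hiI
          rw [hp'def, Function.update_self]
          exact hipq
        have hDer : (univ.filter fun j => p' j ≠ q j) = D.erase i := by
          ext j
          by_cases hj : j = i
          · subst hj
            simp [hp'def, Function.update_self]
          · simp only [mem_filter, mem_univ, true_and, mem_erase, hD]
            rw [hp'def, Function.update_of_ne hj]
            tauto
        have hcard' : #(univ.filter fun j => p' j ≠ q j) = d := by
          rw [hDer, card_erase_of_mem hiD]
          omega
        have hag' : ∀ i' ∈ I, p' i' = q i' := by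
          intro i' hi'
          have : i' ≠ i := fun h => hiI (h ▸ hi')
          rw [hp'def, Function.update_of_ne this]
          exact hag i' hi'
        exact Rtrans p p' q hp hp' hq hpp' (IH p' q hp' hq hag' hcard')
      · set q' := Function.update q i (p i) with hq'def
        have hq' : StrictMono q' :=
          updStrict hq i (p i) (fun j hj => lt_trans (hq hj) hc)
            (fun j hj => by rw [← htop j hj]; exact hp hj)
        have hqq' : R q q' := by
          refine (onestep q q' hq hq' i (fun j hj => (Function.update_of_ne hj _ _).symm)
            ?_).mpr hiI
          rw [hq'def, Function.update_self]
          exact hipq.symm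
        have hDer : (univ.filter fun j => p j ≠ q' j) = D.erase i := by
          ext j
          by_cases hj : j = i
          · subst hj
            simp [hq'def, Function.update_self]
          · simp only [mem_filter, mem_univ, true_and, mem_erase, hD]
            rw [hq'def, Function.update_of_ne hj]
            tauto
        have hcard' : #(univ.filter fun j => p j ≠ q' j) = d := by
          rw [hDer, card_erase_of_mem hiD]
          omega
        have hag' : ∀ i' ∈ I, p i' = q' i' := by
          intro i' hi'
          have : i' ≠ i := fun h => hiI (h ▸ hi')
          rw [hq'def, Function.update_of_ne this]
          exact hag i' hi'
        exact Rtrans p q' q hp hq' hq (IH p q' hp hq' hag' hcard') (Rsymm q q' hq hq' hqq')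
  -- base step of the forward direction
  have basestep : ∀ p q, StrictMono p → StrictMono q → ∀ i : Fin n,
      R p q → p i ≠ q i → (∀ j, p i ≠ q j) → i ∉ I := by
    intro p q hp hq i hR hne hunsh
    have hn1 : 1 ≤ n := by have := i.2; omega
    have hA := grdF_strictMono hl (q := q) hp
    have hB := grdG_strictMono hl (p := p) hq
    have hRAB : R (grdF hl p q) (grdG hl p q) :=
      (Rinv _ _ p q hA hB hp hq (TT_grd hl p q)).mpr hR
    have hvb : (n+2)*((rp p q i : ℕ)+2) + 1 < l' := by
      have hb := aux_bound hl (v := (rp p q i : ℕ))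
        (by have := (rp p q i).2; have := kC_le p q; omega) hn1
      omega
    set v : Fin l' := ⟨(n+2)*((rp p q i : ℕ)+2) + 1, hvb⟩ with hv
    set A' := Function.update (grdF hl p q) i v with hA'def
    have hA' : StrictMono A' := by
      refine updStrict hA i v ?_ ?_
      · intro j hj
        show ((grdF hl p q j : ℕ)) < (v : ℕ)
        have h1 : (rp p q j : ℕ) < (rp p q i : ℕ) := rp_strictMono (q := q) hp hj
        show (n+2)*((rp p q j : ℕ)+2) < (n+2)*((rp p q i : ℕ)+2) + 1
        have := Nat.mul_le_mul_left (n+2) (show (rp p q j : ℕ)+2 ≤ (rp p q i : ℕ)+2 by omega)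
        have h2 : (n+2)*((rp p q j : ℕ)+2) ≠ (n+2)*((rp p q i : ℕ)+2) := by
          intro h
          have := Nat.eq_of_mul_eq_mul_left (show 0 < n+2 by omega) h
          omega
        omega
      · intro j hj
        show (v : ℕ) < ((grdF hl p q j : ℕ))
        have h1 : (rp p q i : ℕ) < (rp p q j : ℕ) := rp_strictMono (q := q) hp hj
        show (n+2)*((rp p q i : ℕ)+2) + 1 < (n+2)*((rp p q j : ℕ)+2)
        have := Nat.mul_le_mul_left (n+2) (show (rp p q i : ℕ)+3 ≤ (rp p q j : ℕ)+2 by omega)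
        have hexp : (n+2)*((rp p q i : ℕ)+3) = (n+2)*((rp p q i : ℕ)+2)+(n+2) := by ring
        omega
    -- the deformed grid embedding
    have hPhib : ∀ ρ : Fin (kC p q),
        (n+2)*((ρ : ℕ)+2) + (if ρ = rp p q i then 1 else 0) < l' := by
      intro ρ
      have hb := aux_bound hl (v := (ρ : ℕ))
        (by have := ρ.2; have := kC_le p q; omega) hn1
      split <;> omega
    set Phi' : Fin (kC p q) → Fin l' :=
      fun ρ => ⟨(n+2)*((ρ : ℕ)+2) + (if ρ = rp p q i then 1 else 0), hPhib ρ⟩ with hPhi'def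
    have hPhi' : StrictMono Phi' := by
      intro ρ ρ' hlt
      show ((n+2)*((ρ : ℕ)+2) + _ : ℕ) < (n+2)*((ρ' : ℕ)+2) + _
      have h1 := Nat.mul_le_mul_left (n+2) (show (ρ : ℕ)+3 ≤ (ρ' : ℕ)+2 by
        have : (ρ:ℕ) < (ρ':ℕ) := hlt
        omega)
      have hexp : (n+2)*((ρ : ℕ)+3) = (n+2)*((ρ : ℕ)+2)+(n+2) := by ring
      split <;> split <;> omega
    have hA'Phi : A' = Phi' ∘ rp p q := by
      funext j
      by_cases hj : j = i
      · subst hj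
        rw [hA'def, Function.update_self]
        apply Fin.ext
        show (v : ℕ) = (n+2)*((rp p q j : ℕ)+2) + (if rp p q j = rp p q j then 1 else 0)
        rw [if_pos rfl]
      · rw [hA'def, Function.update_of_ne hj]
        apply Fin.ext
        show (n+2)*((rp p q j : ℕ)+2) = (n+2)*((rp p q j : ℕ)+2) + _
        rw [if_neg (fun h => hj ((rp_strictMono (q := q) hp).injective h))]
        omega
    have hBPhi : grdG hl p q = Phi' ∘ rq p q := by
      funext j
      apply Fin.ext
      show (n+2)*((rq p q j : ℕ)+2) = (n+2)*((rq p q j : ℕ)+2) + _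
      rw [if_neg (fun h => hunsh j
        (rk_inj (mem_uSet_q p q j) (mem_uSet_p p q i) (congrArg Fin.val h)).symm)]
      omega
    have hTT : TT n A' (grdG hl p q) = TT n p q := by
      rw [hA'Phi, hBPhi, TY Phi' hPhi' _ _ (cov_rpq p q), TT_eq_rpq]
    have hRA'B : R A' (grdG hl p q) := (Rinv _ _ p q hA' hB hp hq hTT).mpr hR
    have hRAA' : R (grdF hl p q) A' :=
      Rtrans _ _ _ hA hB hA' hRAB (Rsymm _ _ hA' hB hRA'B)
    refine (onestep (grdF hl p q) A' hA hA' i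
      (fun j hj => (Function.update_of_ne hj _ _).symm) ?_).mp hRAA'
    rw [hA'def, Function.update_self]
    intro h
    have h2 := congrArg Fin.val h
    have hval : ((grdF hl p q i) : ℕ) = (n+2)*((rp p q i : ℕ)+2) := rfl
    have hval2 : (v : ℕ) = (n+2)*((rp p q i : ℕ)+2) + 1 := rfl
    omega
  -- forward direction by induction on thread death time
  have fwd : ∀ d (p q : Fin n → Fin l'), StrictMono p → StrictMono q → R p q →
      ∀ i : Fin n, p i ≠ q i → Dies p q d i → i ∉ I := by
    intro d
    induction d with
    | zero =>
      intro p q hp hq hR i hne hD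
      exact basestep p q hp hq i hR hne hD
    | succ d IH =>
      intro p q hp hq hR i hne hD
      by_cases hunsh : ∀ j, p i ≠ q j
      · exact basestep p q hp hq i hR hne hunsh
      · have hA := grdF_strictMono hl (q := q) hp
        have hB := grdG_strictMono hl (p := p) hq
        have hC : StrictMono (Phi1 hl q hp ∘ rq p q) :=
          (Phi1_strictMono hl hp hq).comp (rq_strictMono hq)
        have hR01 : R (grdF hl p q) (grdG hl p q) :=
          (Rinv _ _ p q hA hB hp hq (TT_grd hl p q)).mpr hR
        have hR12 : R (grdG hl p q) (Phi1 hl q hp ∘ rq p q) :=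
          (Rinv _ _ p q hB hC hp hq (TT_p1p2 hl hp hq)).mpr hR
        have hR02 := Rtrans _ _ _ hA hB hC hR01 hR12
        have hne' : grdF hl p q i ≠ (Phi1 hl q hp ∘ rq p q) i := differ_at hl hp hq hne
        have hD' : Dies (grdF hl p q) (Phi1 hl q hp ∘ rq p q) d i :=
          Dies_transfer hl hp hq d i hD
        exact IH _ _ hA hC hR02 i hne' hD'
  refine ⟨I, fun p q hp hq => ⟨fun hR i hiI => ?_, fun h => back _ p q hp hq h rfl⟩⟩
  by_contra hne
  exact (fwd n p q hp hq hR i hne (diesAll hp hq hne)) hiI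

end Core

section Ramsey
variable {α : Type*} [LinearOrder α] {C : Type*} [Fintype C] [Nonempty C] [DecidableEq C]

theorem myRamsey (n L : ℕ) :
    ∃ M : ℕ, ∀ (χ : Finset α → C) (V : Finset α), M ≤ #V →
      ∃ H, H ⊆ V ∧ #H = L ∧
        ∀ x ⊆ H, ∀ y ⊆ H, #x = n → #y = n → χ x = χ y := by
  induction n generalizing L with
  | zero =>
    refine ⟨L, fun χ V hV => ?_⟩
    obtain ⟨H, hHV, hHc⟩ := exists_subset_card_eq hV
    refine ⟨H, hHV, hHc, fun x _ y _ hx hy => ?_⟩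
    rw [card_eq_zero.mp hx, card_eq_zero.mp hy]
  | succ n IH =>
    -- auxiliary: min-homogeneous sets of any size with a tail reservoir
    have aux : ∀ r : ℕ, ∃ M : ℕ, ∀ (χ : Finset α → C) (V : Finset α), M ≤ #V →
        ∃ A W : Finset α, A ⊆ V ∧ W ⊆ V ∧ #A = r ∧ #W = n ∧
          (∀ a ∈ A, ∀ w ∈ W, a < w) ∧
          (∀ x ⊆ A ∪ W, ∀ y ⊆ A ∪ W, #x = n + 1 → #y = n + 1 →
            ∀ (hxn : x.Nonempty) (hyn : y.Nonempty),
              x.min' hxn ∈ A → x.min' hxn = y.min' hyn → χ x = χ y) := by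
      intro r
      induction r with
      | zero =>
        refine ⟨n, fun χ V hV => ?_⟩
        obtain ⟨W, hWV, hWc⟩ := exists_subset_card_eq hV
        exact ⟨∅, W, empty_subset _, hWV, card_empty, hWc, by simp, by
          intro x _ y _ _ _ hxn _ hmin _
          exact absurd hmin (by simp)⟩
      | succ r IHr =>
        obtain ⟨Mr, hMr⟩ := IHr
        obtain ⟨MI, hMI⟩ := IH Mr
        refine ⟨MI + 1, fun χ V hV => ?_⟩
        have hVne : V.Nonempty := card_pos.mp (by omega)
        set a := V.min' hVne with ha
        have haV : a ∈ V := V.min'_mem hVne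
        set V' := V.erase a with hV'
        have hV'c : #V' = #V - 1 := card_erase_of_mem haV
        have hlt : ∀ x ∈ V', a < x := by
          intro x hx
          rcases mem_erase.mp hx with ⟨hne, hxV⟩
          exact lt_of_le_of_ne (V.min'_le x hxV) (Ne.symm hne)
        obtain ⟨H, hHV', hHc, hHom⟩ :=
          hMI (fun z => χ (insert a z)) V' (by omega)
        obtain ⟨A, W, hAH, hWH, hAc, hWc, hAW, hMH⟩ := hMr χ H (by omega)
        have hAV' : A ⊆ V' := hAH.trans hHV'
        have hWV' : W ⊆ V' := hWH.trans hHV'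
        have haA : a ∉ A := fun h => lt_irrefl a (hlt a (hAV' h))
        refine ⟨insert a A, W, ?_, ?_, ?_, hWc, ?_, ?_⟩
        · exact insert_subset haV (hAV'.trans (erase_subset _ _))
        · exact hWV'.trans (erase_subset _ _)
        · rw [card_insert_of_notMem haA, hAc]
        · intro a' ha' w hw
          rcases mem_insert.mp ha' with rfl | ha'
          · exact hlt w (hWV' hw)
          · exact hAW a' ha' w hw
        · intro x hx y hy hxc hyc hxn hyn hminA hmineq
          have hins : insert a A ∪ W = insert a (A ∪ W) := by
            rw [insert_union]
          rcases mem_insert.mp hminA with hma | hma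
          · -- min is a itself
            have hax : a ∈ x := hma ▸ x.min'_mem hxn
            have hay : a ∈ y := by
              have : y.min' hyn = a := by rw [← hmineq, hma]
              exact this ▸ y.min'_mem hyn
            have hxe : x.erase a ⊆ A ∪ W := by
              intro z hz
              rcases mem_erase.mp hz with ⟨hne, hzx⟩
              rcases mem_insert.mp (hins ▸ hx hzx) with rfl | h
              · exact absurd rfl hne
              · exact h
            have hye : y.erase a ⊆ A ∪ W := by
              intro z hz
              rcases mem_erase.mp hz with ⟨hne, hzy⟩
              rcases mem_insert.mp (hins ▸ hy hzy) with rfl | h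
              · exact absurd rfl hne
              · exact h
            have hAWH : A ∪ W ⊆ H := union_subset hAH hWH
            have h1 : χ x = χ (insert a (x.erase a)) := by rw [insert_erase hax]
            have h2 : χ y = χ (insert a (y.erase a)) := by rw [insert_erase hay]
            rw [h1, h2]
            exact hHom (x.erase a) (hxe.trans hAWH) (y.erase a) (hye.trans hAWH)
              (by rw [card_erase_of_mem hax, hxc]; omega) (by rw [card_erase_of_mem hay, hyc]; omega)
          · -- min is in A : a cannot occur in x or y
            have hax : a ∉ x := by
              intro hax
              have h1 : x.min' hxn ≤ a := x.min'_le a hax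
              have h2 : a < x.min' hxn := hlt _ (hAV' hma)
              exact absurd h1 (not_le.mpr h2)
            have hay : a ∉ y := by
              intro hay
              have h1 : y.min' hyn ≤ a := y.min'_le a hay
              have h2 : a < y.min' hyn := by
                rw [← hmineq]; exact hlt _ (hAV' hma)
              exact absurd h1 (not_le.mpr h2)
            have hx' : x ⊆ A ∪ W := by
              intro z hz
              rcases mem_insert.mp (hins ▸ hx hz) with rfl | h
              · exact absurd hz hax
              · exact h
            have hy' : y ⊆ A ∪ W := by
              intro z hz
              rcases mem_insert.mp (hins ▸ hy hz) with rfl | h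
              · exact absurd hz hay
              · exact h
            exact hMH x hx' y hy' hxc hyc hxn hyn hma hmineq
    -- now pigeonhole on the min-homogeneous set
    obtain ⟨M, hM⟩ := aux (Fintype.card C * L)
    refine ⟨M, fun χ V hV => ?_⟩
    obtain ⟨A, W, hAV, hWV, hAc, hWc, hAW, hMH⟩ := hM χ V hV
    have hmaps : ∀ x ∈ A, (fun x => χ (insert x W)) x ∈ (univ : Finset C) := by
      intro x _; exact mem_univ _
    obtain ⟨col, _, hcol⟩ := exists_le_card_fiber_of_mul_le_card_of_maps_to hmaps
      univ_nonempty (by rw [hAc, card_univ])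
    obtain ⟨H, hHF, hHc⟩ := exists_subset_card_eq hcol
    have hHA : H ⊆ A := hHF.trans (filter_subset _ _)
    refine ⟨H, hHA.trans hAV, hHc, ?_⟩
    intro x hx y hy hxc hyc
    have hxn : x.Nonempty := card_pos.mp (by omega)
    have hyn : y.Nonempty := card_pos.mp (by omega)
    have key : ∀ z ⊆ H, ∀ (hzn : z.Nonempty), #z = n + 1 → χ z = col := by
      intro z hz hzn hzc
      have hmz : z.min' hzn ∈ A := hHA (hz (z.min'_mem hzn))
      have hmzW : z.min' hzn ∉ W := fun h => lt_irrefl _ (hAW _ hmz _ h)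
      have hic : #(insert (z.min' hzn) W) = n + 1 := by
        rw [card_insert_of_notMem hmzW, hWc]
      have hin : (insert (z.min' hzn) W).Nonempty := insert_nonempty _ _
      have hmins : (insert (z.min' hzn) W).min' hin = z.min' hzn := by
        refine le_antisymm (min'_le _ _ (mem_insert_self _ _)) (le_min' _ _ _ ?_)
        intro y hy
        rcases mem_insert.mp hy with rfl | hy
        · exact le_refl _
        · exact le_of_lt (hAW _ hmz _ hy)
      have h1 : χ z = χ (insert (z.min' hzn) W) := by
        refine hMH z (fun w hw => mem_union_left _ (hHA (hz hw)))
          (insert (z.min' hzn) W) ?_ hzc hic hzn hin hmz hmins.symm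
        intro w hw
        rcases mem_insert.mp hw with rfl | hw
        · exact mem_union_left _ hmz
        · exact mem_union_right _ hw
      have h2 : χ (insert (z.min' hzn) W) = col := by
        have := hHF (hz (z.min'_mem hzn))
        exact (mem_filter.mp this).2
      rw [h1, h2]
    rw [key x hx hxn hxc, key y hy hyn hyc]

end Ramsey

/-- Finite Erdős–Rado canonization theorem: for all `n ≤ l` there is `m > l`
such that every equivalence relation `E` on the `n`-element subsets of `{0,…,m-1}` is
canonical when restricted to the `n`-element subsets of some `l`-element set `s`: there is
`I ⊆ n` with `E = E_I` on `[s]^n`. -/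
theorem stmt_12 (n l : ℕ) (hnl : n ≤ l) :
    ∃ m : ℕ, l < m ∧
      ∀ E : {t : Finset (Fin m) // t.card = n} → {t : Finset (Fin m) // t.card = n} → Prop,
        Equivalence E →
        ∃ s : Finset (Fin m), s.card = l ∧
          ∃ I : Set (Fin n),
            ∀ b c : {t : Finset (Fin m) // t.card = n},
              b.1 ⊆ s → c.1 ⊆ s →
              (E b c ↔ ∀ i ∈ I, b.1.orderEmbOfFin b.2 i = c.1.orderEmbOfFin c.2 i) := by
  classical
  set B := (n+2)*(2*n+2) with hBdef
  set l' := l + B + 1 with hl'def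
  have hl : B < l' := by omega
  set L := l' + n with hLdef
  obtain ⟨M, hM⟩ := myRamsey (α := ℕ)
    (C := (Fin n → Fin (2*n)) → (Fin n → Fin (2*n)) → Bool) (2*n) L
  refine ⟨M + l + 1, by omega, ?_⟩
  set m := M + l + 1 with hm
  intro E hE
  -- the coloring of 2n-subsets of Fin m
  set χFin : Finset (Fin m) → (Fin n → Fin (2*n)) → (Fin n → Fin (2*n)) → Bool := fun X =>
    if hX : #X = 2*n then
      (fun pp kk =>
        if (StrictMono pp ∧ StrictMono kk ∧
            ∃ (hb : #(image (⇑(X.orderEmbOfFin hX) ∘ pp) univ) = n)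
              (hc : #(image (⇑(X.orderEmbOfFin hX) ∘ kk) univ) = n),
              E ⟨image (⇑(X.orderEmbOfFin hX) ∘ pp) univ, hb⟩
                ⟨image (⇑(X.orderEmbOfFin hX) ∘ kk) univ, hc⟩)
         then true else false)
    else (fun _ _ => false)
    with hχdef
  set χ : Finset ℕ → (Fin n → Fin (2*n)) → (Fin n → Fin (2*n)) → Bool := fun X =>
    if hX : ∀ a ∈ X, a < m then χFin (X.attachFin hX) else (fun _ _ => false)
    with hχNdef
  obtain ⟨H, hHsub, hHcard, hHom⟩ := hM χ (Finset.range m) (by rw [card_range]; omega)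
  have hHm : ∀ a ∈ H, a < m := fun a ha => Finset.mem_range.mp (hHsub ha)
  set HF : Finset (Fin m) := H.attachFin hHm with hHFdef
  have hHFcard : #HF = L := by rw [hHFdef, card_attachFin]; exact hHcard
  -- homogeneity at the Fin m level
  have hHomF : ∀ X ⊆ HF, ∀ Y ⊆ HF, #X = 2*n → #Y = 2*n → χFin X = χFin Y := by
    intro X hX Y hY hXc hYc
    have hconv : ∀ (Z : Finset (Fin m)), χ (image Fin.val Z) = χFin Z := by
      intro Z
      have hcond : ∀ a ∈ image Fin.val Z, a < m := by
        intro a ha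
        obtain ⟨x, _, rfl⟩ := mem_image.mp ha
        exact x.isLt
      have hatt : (image Fin.val Z).attachFin hcond = Z := by
        ext a
        rw [mem_attachFin]
        constructor
        · intro h
          obtain ⟨x, hx, hxa⟩ := mem_image.mp h
          rwa [← Fin.val_injective hxa]
        · intro h
          exact mem_image_of_mem _ h
      rw [hχNdef]
      simp only [dif_pos hcond]
      rw [hatt]
    have hXsub : image Fin.val X ⊆ H := by
      intro a ha
      obtain ⟨x, hx, rfl⟩ := mem_image.mp ha
      have := hX hx
      rw [hHFdef, mem_attachFin] at this
      exact this
    have hYsub : image Fin.val Y ⊆ H := by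
      intro a ha
      obtain ⟨x, hx, rfl⟩ := mem_image.mp ha
      have := hY hx
      rw [hHFdef, mem_attachFin] at this
      exact this
    have h1 := hHom (image Fin.val X) hXsub (image Fin.val Y) hYsub
      (by rw [card_image_of_injective _ Fin.val_injective]; exact hXc)
      (by rw [card_image_of_injective _ Fin.val_injective]; exact hYc)
    rw [← hconv X, ← hconv Y, h1]
  -- the order embedding of the homogeneous set
  have hl'L : l' ≤ L := by omega
  set EH : Fin L → Fin m := ⇑(HF.orderEmbOfFin hHFcard) with hEHdef
  have hEHSM : StrictMono EH := (HF.orderEmbOfFin hHFcard).strictMono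
  have hEHmem : ∀ t, EH t ∈ HF := fun t => orderEmbOfFin_mem HF hHFcard t
  set e : Fin l' → Fin m := fun t => EH (Fin.castLE hl'L t) with hedef
  have heSM : StrictMono e := fun a b h => hEHSM (show Fin.castLE hl'L a < Fin.castLE hl'L b from h)
  have hecard : #(image e univ) = l' := by
    rw [card_image_of_injective _ heSM.injective, card_univ, Fintype.card_fin]
  -- the relation on index tuples
  set R : (Fin n → Fin l') → (Fin n → Fin l') → Prop := fun p q =>
    ∃ (hb : #(image (e ∘ p) univ) = n) (hc : #(image (e ∘ q) univ) = n),
      E ⟨image (e ∘ p) univ, hb⟩ ⟨image (e ∘ q) univ, hc⟩ with hRdef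
  have cardim : ∀ (f : Fin n → Fin m), Function.Injective f → #(image f univ) = n := by
    intro f hf
    rw [card_image_of_injective _ hf, card_univ, Fintype.card_fin]
  have Rrefl : ∀ p, StrictMono p → R p p := by
    intro p hp
    exact ⟨cardim _ (heSM.comp hp).injective, cardim _ (heSM.comp hp).injective, hE.refl _⟩
  have Rsymm : ∀ p q, StrictMono p → StrictMono q → R p q → R q p := by
    rintro p q hp hq ⟨hb, hc, h⟩
    exact ⟨hc, hb, hE.symm h⟩
  have Rtrans : ∀ p q r, StrictMono p → StrictMono q → StrictMono r →
      R p q → R q r → R p r := by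
    rintro p q r hp hq hr ⟨hb, hc, h1⟩ ⟨hc', hd, h2⟩
    exact ⟨hb, hd, hE.trans h1 h2⟩
  have hite : ∀ (P : Prop) (inst : Decidable P), (@ite Bool P inst true false = true ↔ P) := by
    intro P inst
    split <;> simp [*]
  -- the construction of a padded 2n-set realizing a pair
  have build : ∀ p q : Fin n → Fin l', StrictMono p → StrictMono q →
      ∃ (X : Finset (Fin m)) (π κ : Fin n → Fin (2*n)),
        X ⊆ HF ∧ #X = 2*n ∧
        (∀ j, (π j : ℕ) = (TT n p q).1 j) ∧ (∀ j, (κ j : ℕ) = (TT n p q).2 j) ∧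
        (R p q ↔ χFin X π κ = true) := by
    intro p q hp hq
    have hf : StrictMono (e ∘ p) := heSM.comp hp
    have hg : StrictMono (e ∘ q) := heSM.comp hq
    set f := e ∘ p with hfdef
    set g := e ∘ q with hgdef
    set u : Finset (Fin m) := uSet f g with hudef
    set k := kC f g with hkdef
    have hkn : n ≤ k := le_kC f g hf.injective
    have hk2n : k ≤ 2*n := kC_le f g
    have topb : ∀ t : Fin (2*n - k), l' + n - (2*n - k) + (t:ℕ) < L := by
      intro t; have := t.2; omega
    set Top : Finset (Fin m) :=
      image (fun t : Fin (2*n - k) => EH ⟨l' + n - (2*n-k) + t, topb t⟩) univ with hTopdef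
    have hTopc : #Top = 2*n - k := by
      rw [hTopdef, card_image_of_injective _ (fun a b hab => by
        have := hEHSM.injective hab
        have := congrArg Fin.val this
        simp at this
        exact Fin.ext (by omega)), card_univ, Fintype.card_fin]
    have huform : ∀ x ∈ u, ∃ a : Fin l', e a = x := by
      intro x hx
      rcases mem_union.mp hx with h | h
      · obtain ⟨j, _, rfl⟩ := mem_image.mp h
        exact ⟨p j, rfl⟩
      · obtain ⟨j, _, rfl⟩ := mem_image.mp h
        exact ⟨q j, rfl⟩
    have husub : u ⊆ HF := by
      intro x hx
      obtain ⟨a, rfl⟩ := huform x hx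
      exact hEHmem _
    have hTopsub : Top ⊆ HF := by
      intro x hx
      obtain ⟨t, _, rfl⟩ := mem_image.mp hx
      exact hEHmem _
    have hdisj : Disjoint u Top := by
      rw [Finset.disjoint_left]
      intro x hxu hxT
      obtain ⟨a, rfl⟩ := huform x hxu
      obtain ⟨t, _, hts⟩ := mem_image.mp hxT
      have := hEHSM.injective hts
      have hval := congrArg Fin.val this
      simp [hedef] at hval
      have h1 := a.2
      have h2 := t.2
      omega
    set X := u ∪ Top with hXdef
    have hXc : #X = 2*n := by
      rw [hXdef, card_union_of_disjoint hdisj, hTopc]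
      have : #u = k := rfl
      omega
    have hXsub : X ⊆ HF := union_subset husub hTopsub
    have humem : ∀ x ∈ u, x ∈ X := fun x hx => mem_union_left _ hx
    -- ranks are unchanged by the padding
    have hrk : ∀ x ∈ u, rk X x = rk u x := by
      intro x hxu
      unfold rk
      congr 1
      ext y
      simp only [mem_filter]
      constructor
      · rintro ⟨hyX, hlt⟩
        rcases mem_union.mp hyX with h | h
        · exact ⟨h, hlt⟩
        · exfalso
          obtain ⟨a, rfl⟩ := huform x hxu
          obtain ⟨t, _, hts⟩ := mem_image.mp h
          rw [← hts] at hlt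
          have : (Fin.castLE hl'L a : Fin L) > ⟨l' + n - (2*n-k) + t, topb t⟩ := by
            exact hEHSM.lt_iff_lt.mp hlt
          have hval : (a : ℕ) > l' + n - (2*n-k) + t := this
          have h1 := a.2
          omega
      · rintro ⟨hyu, hlt⟩
        exact ⟨mem_union_left _ hyu, hlt⟩
    have hπb : ∀ j, rk u (f j) < 2*n :=
      fun j => lt_of_lt_of_le (rk_lt_card (mem_uSet_p f g j)) hk2n
    have hκb : ∀ j, rk u (g j) < 2*n :=
      fun j => lt_of_lt_of_le (rk_lt_card (mem_uSet_q f g j)) hk2n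
    set π : Fin n → Fin (2*n) := fun j => ⟨rk u (f j), hπb j⟩ with hπdef
    set κ : Fin n → Fin (2*n) := fun j => ⟨rk u (g j), hκb j⟩ with hκdef
    have hπSM : StrictMono π := fun a b h => rk_strictMonoOn (mem_uSet_p f g a) (hf h)
    have hκSM : StrictMono κ := fun a b h => rk_strictMonoOn (mem_uSet_q f g a) (hg h)
    have hTTfg : TT n f g = TT n p q := TT_comp e heSM p q
    have hπvals : ∀ j, (π j : ℕ) = (TT n p q).1 j := by
      intro j
      show rk u (f j) = _
      rw [← hTTfg, TT_fst f g j]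
    have hκvals : ∀ j, (κ j : ℕ) = (TT n p q).2 j := by
      intro j
      show rk u (g j) = _
      rw [← hTTfg, TT_snd f g j]
    -- the enumeration of X recovers f and g at the positions π, κ
    have hembπ : ⇑(X.orderEmbOfFin hXc) ∘ π = f := by
      funext j
      have hmem : f j ∈ X := humem _ (mem_uSet_p f g j)
      have h0 := orderEmbOfFin_rk (s := X) hXc hmem
      have h1 : π j = ⟨rk X (f j), hXc ▸ rk_lt_card hmem⟩ := by
        apply Fin.ext
        show rk u (f j) = rk X (f j)
        rw [hrk _ (mem_uSet_p f g j)]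
      show X.orderEmbOfFin hXc (π j) = f j
      rw [h1]
      exact h0
    have hembκ : ⇑(X.orderEmbOfFin hXc) ∘ κ = g := by
      funext j
      have hmem : g j ∈ X := humem _ (mem_uSet_q f g j)
      have h0 := orderEmbOfFin_rk (s := X) hXc hmem
      have h1 : κ j = ⟨rk X (g j), hXc ▸ rk_lt_card hmem⟩ := by
        apply Fin.ext
        show rk u (g j) = rk X (g j)
        rw [hrk _ (mem_uSet_q f g j)]
      show X.orderEmbOfFin hXc (κ j) = g j
      rw [h1]
      exact h0
    refine ⟨X, π, κ, hXsub, hXc, hπvals, hκvals, ?_⟩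
    rw [hχdef]
    simp only [dif_pos hXc]
    rw [hite]
    rw [hembπ, hembκ]
    constructor
    · rintro ⟨hb, hc, hEbc⟩
      exact ⟨hπSM, hκSM, hb, hc, hEbc⟩
    · rintro ⟨-, -, hb, hc, hEbc⟩
      exact ⟨hb, hc, hEbc⟩
  have Rinv : ∀ p q p' q', StrictMono p → StrictMono q → StrictMono p' → StrictMono q' →
      TT n p q = TT n p' q' → (R p q ↔ R p' q') := by
    intro p q p' q' hp hq hp' hq' hTT
    obtain ⟨X, π, κ, hXsub, hXc, hπv, hκv, hiff⟩ := build p q hp hq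
    obtain ⟨X', π', κ', hXsub', hXc', hπv', hκv', hiff'⟩ := build p' q' hp' hq'
    have hππ : π = π' := by
      funext j
      apply Fin.ext
      rw [hπv j, hπv' j, hTT]
    have hκκ : κ = κ' := by
      funext j
      apply Fin.ext
      rw [hκv j, hκv' j, hTT]
    have hXX : χFin X = χFin X' := hHomF X hXsub X' hXsub' hXc hXc'
    rw [hiff, hiff', hππ, hκκ, hXX]
  obtain ⟨I, hI⟩ := core hl R Rrefl Rsymm Rtrans Rinv
  have hll' : l ≤ l' := by omega
  set s : Finset (Fin m) := image (fun t : Fin l => e (Fin.castLE hll' t)) univ with hsdef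
  have hscard : #s = l := by
    rw [hsdef, card_image_of_injective _
      (fun a b hab => by
        have h2 := heSM.injective hab
        exact Fin.ext (by have h3 := congrArg Fin.val h2; simpa using h3)), card_univ,
      Fintype.card_fin]
  refine ⟨s, hscard, I, ?_⟩
  intro b c hbs hcs
  -- express the enumerations of b and c through e
  have hmemsub : ∀ (z : {t : Finset (Fin m) // #t = n}), z.1 ⊆ s →
      ∀ x ∈ z.1, x ∈ image e univ := by
    intro z hzs x hx
    obtain ⟨t, _, rfl⟩ := mem_image.mp (hzs hx)
    exact mem_image_of_mem _ (mem_univ _)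
  have key : ∀ (z : {t : Finset (Fin m) // #t = n}), z.1 ⊆ s →
      ∃ pz : Fin n → Fin l', StrictMono pz ∧
        (∀ j, e (pz j) = z.1.orderEmbOfFin z.2 j) ∧
        image (e ∘ pz) univ = z.1 := by
    intro z hzs
    have hmem : ∀ j, (z.1.orderEmbOfFin z.2 j : Fin m) ∈ image e univ :=
      fun j => hmemsub z hzs _ (orderEmbOfFin_mem z.1 z.2 j)
    have hbnd : ∀ j, rk (image e univ) (z.1.orderEmbOfFin z.2 j) < l' := by
      intro j
      have := rk_lt_card (hmem j)
      rwa [hecard] at this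
    set pz : Fin n → Fin l' :=
      fun j => ⟨rk (image e univ) (z.1.orderEmbOfFin z.2 j), hbnd j⟩ with hpz
    have hepz : ∀ j, e (pz j) = z.1.orderEmbOfFin z.2 j := by
      intro j
      obtain ⟨t, _, ht⟩ := mem_image.mp (hmem j)
      rw [← ht]
      congr 1
      apply Fin.ext
      show rk (image e univ) (z.1.orderEmbOfFin z.2 j) = (t : ℕ)
      rw [← ht]
      have hh := rk_image_fin e heSM t
      convert hh using 2
    refine ⟨pz, ?_, hepz, ?_⟩
    · intro a b hab
      exact rk_strictMonoOn (hmem a) ((z.1.orderEmbOfFin z.2).strictMono hab)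
    · have hfun : (e ∘ pz) = ⇑(z.1.orderEmbOfFin z.2) := funext hepz
      rw [hfun]
      have hh := image_orderEmbOfFin z.1 z.2
      convert hh using 1
  obtain ⟨pb, hpbSM, hpbe, hpbim⟩ := key b hbs
  obtain ⟨pc, hpcSM, hpce, hpcim⟩ := key c hcs
  have hRbc : R pb pc ↔ E b c := by
    constructor
    · rintro ⟨hb, hc, hEbc⟩
      have h1 : (⟨image (e ∘ pb) univ, hb⟩ : {t : Finset (Fin m) // #t = n}) = b :=
        Subtype.ext hpbim
      have h2 : (⟨image (e ∘ pc) univ, hc⟩ : {t : Finset (Fin m) // #t = n}) = c :=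
        Subtype.ext hpcim
      rwa [h1, h2] at hEbc
    · intro hEbc
      refine ⟨by rw [hpbim]; exact b.2, by rw [hpcim]; exact c.2, ?_⟩
      have h1 : (⟨image (e ∘ pb) univ, by rw [hpbim]; exact b.2⟩ :
          {t : Finset (Fin m) // #t = n}) = b := Subtype.ext hpbim
      have h2 : (⟨image (e ∘ pc) univ, by rw [hpcim]; exact c.2⟩ :
          {t : Finset (Fin m) // #t = n}) = c := Subtype.ext hpcim
      rw [h1, h2]
      exact hEbc
  have hfin := hI pb pc hpbSM hpcSM
  rw [← hRbc, hfin]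
  constructor
  · intro h i hiI
    rw [← hpbe i, ← hpce i, h i hiI]
  · intro h i hiI
    apply heSM.injective
    rw [hpbe i, hpce i]
    exact h i hiI
end

section
/- Finite product Ramsey theorem for sets: for every s < ω, all n_j ≤ m_j (j < s), and every k ≥ 2, there exist p_j (j < s) such that for every k-coloring of ∏_{j<s} [p_j]^{n_j} there are B_j ∈ [p_j]^{m_j} with ∏_{j<s} [B_j]^{n_j} monochromatic. -/
open Finset in
/-- Infinite Ramsey theorem. -/
theorem infRamsey (α : Type) [Finite α] (n : ℕ) :
    ∀ (c : Finset ℕ → α) (S : Set ℕ), S.Infinite →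
      ∃ T ⊆ S, T.Infinite ∧ ∃ i : α,
        ∀ A : Finset ℕ, ↑A ⊆ T → A.card = n → c A = i := by
  induction n with
  | zero =>
    intro c S hS
    exact ⟨S, le_refl _, hS, c ∅, fun A _ hA => by
      rw [Finset.card_eq_zero.mp hA]⟩
  | succ n IH =>
    intro c S hS
    -- one-step refinement
    have hstep : ∀ S : Set ℕ, S.Infinite → ∃ r : ℕ × Set ℕ × α,
        r.1 ∈ S ∧ r.2.1 ⊆ S ∧ r.2.1.Infinite ∧ (∀ x ∈ r.2.1, r.1 < x) ∧
        ∀ A : Finset ℕ, ↑A ⊆ r.2.1 → A.card = n → c (insert r.1 A) = r.2.2 := by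
      intro S hS
      obtain ⟨a, ha⟩ := hS.nonempty
      have hS' : (S \ Set.Iic a).Infinite := hS.diff (Set.finite_Iic a)
      obtain ⟨T, hTS, hTinf, i, hi⟩ := IH (fun A => c (insert a A)) _ hS'
      refine ⟨(a, T, i), ha, fun x hx => (hTS hx).1, hTinf, ?_, hi⟩
      intro x hx
      exact lt_of_not_ge fun hle => (hTS hx).2 hle
    choose r h1 h2 h3 h4 h5 using hstep
    -- iterate
    let F : ℕ → {S : Set ℕ // S.Infinite} := fun t =>
      Nat.rec ⟨S, hS⟩ (fun _ p => ⟨(r p.1 p.2).2.1, h3 p.1 p.2⟩) t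
    set a : ℕ → ℕ := fun t => (r (F t).1 (F t).2).1 with ha_def
    set I : ℕ → α := fun t => (r (F t).1 (F t).2).2.2 with hI_def
    have hFsucc : ∀ t, (F (t+1)).1 = (r (F t).1 (F t).2).2.1 := fun t => rfl
    have hmono : ∀ t t', t ≤ t' → (F t').1 ⊆ (F t).1 := by
      intro t t' h
      induction t', h using Nat.le_induction with
      | base => exact le_refl _
      | succ t'' h ih => exact fun x hx => ih (h2 (F t'').1 (F t'').2 hx)
    have haF : ∀ t, a t ∈ (F t).1 := fun t => h1 _ _
    have haS : ∀ t, a t ∈ S := fun t => hmono 0 t (Nat.zero_le t) (haF t)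
    have halt : ∀ t t', t < t' → a t < a t' := by
      intro t t' h
      have : a t' ∈ (F (t+1)).1 := hmono (t+1) t' h (haF t')
      rw [hFsucc] at this
      exact h4 _ _ _ this
    have hainj : Function.Injective a := by
      intro t t' h
      rcases lt_trichotomy t t' with hl | hl | hl
      · exact absurd h (ne_of_lt (halt _ _ hl))
      · exact hl
      · exact absurd h.symm (ne_of_lt (halt _ _ hl))
    -- pigeonhole on colors I
    obtain ⟨i, hi⟩ := Finite.exists_infinite_fiber I
    have hiInf : {t | I t = i}.Infinite := by
      rw [← Set.infinite_coe_iff]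
      exact hi
    refine ⟨a '' {t | I t = i}, ?_, hiInf.image (hainj.injOn), i, ?_⟩
    · rintro x ⟨t, _, rfl⟩; exact haS t
    · intro A hA hcard
      have hne : A.Nonempty := Finset.card_pos.mp (by omega)
      set x := A.min' hne with hx
      obtain ⟨t, hti, hxt⟩ := hA (A.min'_mem hne)
      have herase : ∀ y ∈ A.erase x, y ∈ (F (t+1)).1 := by
        intro y hy
        obtain ⟨t', ht'i, hyt'⟩ := hA (Finset.mem_of_mem_erase hy)
        have hxy : x < y := by
          have := A.min'_le y (Finset.mem_of_mem_erase hy)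
          have := Finset.ne_of_mem_erase hy
          omega
        have htt' : t < t' := by
          rcases lt_trichotomy t t' with h' | h' | h'
          · exact h'
          · exfalso
            have : a t = y := h' ▸ hyt'
            rw [hxt] at this
            omega
          · exfalso
            have := halt _ _ h'
            rw [hyt', hxt] at this
            omega
        have : a t' ∈ (F (t+1)).1 := hmono (t+1) t' htt' (haF t')
        rwa [hyt'] at this
      have hc : c (insert (a t) (A.erase x)) = I t := by
        apply h5
        · intro y hy; exact (hFsucc t) ▸ herase y hy
        · rw [Finset.card_erase_of_mem (A.min'_mem hne)]; omega
      rw [hxt] at hc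
      rw [Finset.insert_erase (A.min'_mem hne)] at hc
      rw [hc]
      exact hti

open Filter in
/-- Finite Ramsey theorem (on initial segments of ℕ). -/
theorem finRamsey (α : Type) [Finite α] (n m : ℕ) :
    ∃ p : ℕ, ∀ c : Finset ℕ → α, ∃ B : Finset ℕ,
      ↑B ⊆ Finset.range p ∧ B.card = m ∧ ∃ i : α,
        ∀ A : Finset ℕ, A ⊆ B → A.card = n → c A = i := by
  by_contra hcon
  push_neg at hcon
  choose c hc using hcon
  -- hc : ∀ p B, ↑B ⊆ range p → card = m → ∀ i, ∃ A ⊆ B, card n ∧ c p A ≠ i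
  set U : Ultrafilter ℕ := Filter.hyperfilter ℕ with hU
  have hlim : ∀ A : Finset ℕ, ∃ i : α, {p | c p A = i} ∈ U := by
    intro A
    by_contra h
    push_neg at h
    have h' : ∀ i : α, {p | c p A = i}ᶜ ∈ U := fun i =>
      (Ultrafilter.compl_mem_iff_notMem).mpr (h i)
    have : (⋂ i : α, {p | c p A = i}ᶜ) ∈ U := by
      haveI : Fintype α := Fintype.ofFinite α
      exact Filter.iInter_mem.mpr h'
    obtain ⟨p, hp⟩ := Ultrafilter.nonempty_of_mem this
    exact (Set.mem_iInter.mp hp (c p A)) rfl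
  choose cs hcs using hlim
  obtain ⟨T, _, hTinf, i0, hmono⟩ := infRamsey α n cs Set.univ Set.infinite_univ
  obtain ⟨B, hBT, hBcard⟩ := hTinf.exists_subset_card_eq m
  set p0 : ℕ := (B.sup id) + 1 with hp0
  have hBr : ∀ q, p0 ≤ q → ↑B ⊆ Finset.range q := by
    intro q hq b hb
    have := Finset.le_sup (f := id) hb
    simp only [id] at this
    exact Finset.mem_range.mpr (by omega)
  -- the "good" set of parameters
  have hgood : ({p | p0 ≤ p} ∩ ⋂ A ∈ B.powerset.filter (fun A => A.card = n),
      {p | c p A = cs A}) ∈ U := by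
    apply Filter.inter_mem
    · exact Filter.hyperfilter_le_cofinite (by
        simp only [Filter.mem_cofinite]
        have : {p : ℕ | p0 ≤ p}ᶜ = {p | p < p0} := by ext; simp [not_le]
        rw [this]
        exact Set.finite_lt_nat p0)
    · refine (Filter.biInter_mem (Finset.finite_toSet _)).mpr ?_
      intro A _
      exact hcs A
  obtain ⟨p, hp1, hp2⟩ := Ultrafilter.nonempty_of_mem hgood
  obtain ⟨A, hAB, hAcard, hAne⟩ := hc p B (hBr p hp1) hBcard i0
  have h1 : cs A = i0 := hmono A (fun x hx => hBT (hAB hx)) hAcard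
  have h2 : c p A = cs A := by
    have := Set.mem_iInter₂.mp hp2 A (by
      simp only [Finset.mem_coe, Finset.mem_filter, Finset.mem_powerset]
      exact ⟨hAB, hAcard⟩)
    exact this
  rw [h2, h1] at hAne
  exact hAne rfl

/-- Pull back a `Finset ℕ` to a `Finset (Fin p)`. -/
noncomputable def toFin (p : ℕ) (B : Finset ℕ) : Finset (Fin p) :=
  B.preimage Fin.val (Fin.val_injective.injOn)

theorem mem_toFin {p : ℕ} {B : Finset ℕ} {a : Fin p} : a ∈ toFin p B ↔ (a : ℕ) ∈ B :=
  Finset.mem_preimage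

theorem toFin_image {p : ℕ} (A : Finset (Fin p)) : toFin p (A.image Fin.val) = A := by
  ext a
  simp [mem_toFin, Fin.val_injective.eq_iff]

theorem image_toFin {p : ℕ} {B : Finset ℕ} (h : ↑B ⊆ Finset.range p) :
    (toFin p B).image Fin.val = B := by
  ext b
  simp only [Finset.mem_image]
  constructor
  · rintro ⟨a, ha, rfl⟩; exact mem_toFin.mp ha
  · intro hb
    exact ⟨⟨b, Finset.mem_range.mp (h hb)⟩, mem_toFin.mpr hb, rfl⟩

theorem toFin_card {p : ℕ} {B : Finset ℕ} (h : ↑B ⊆ Finset.range p) :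
    (toFin p B).card = B.card := by
  have := Finset.card_image_of_injective (toFin p B) Fin.val_injective
  rw [image_toFin h] at this
  exact this.symm

/-- Product Ramsey theorem over ℕ. -/
theorem prodRamsey (α : Type) [Finite α] :
    ∀ (s : ℕ) (n m : Fin s → ℕ),
    ∃ p : Fin s → ℕ, ∀ c : (Fin s → Finset ℕ) → α,
      ∃ B : Fin s → Finset ℕ,
        (∀ j, ↑(B j) ⊆ Finset.range (p j) ∧ (B j).card = m j) ∧
        ∃ i : α, ∀ A : Fin s → Finset ℕ,
          (∀ j, A j ⊆ B j ∧ (A j).card = n j) → c A = i := by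
  intro s
  induction s with
  | zero =>
    intro n m
    refine ⟨Fin.elim0, fun c => ⟨Fin.elim0, fun j => j.elim0, c (fun j => j.elim0), ?_⟩⟩
    intro A _
    congr 1
    exact funext fun j => j.elim0
  | succ s IH =>
    intro n m
    obtain ⟨p', H1⟩ := IH (fun j => n j.succ) (fun j => m j.succ)
    -- colors for the first coordinate: colorings of the finite s-fold product
    set β : Type := (∀ j : Fin s, Finset (Fin (p' j))) → α with hβ
    haveI : Finite β := by infer_instance
    obtain ⟨q, H0⟩ := finRamsey β (n 0) (m 0)
    refine ⟨Fin.cons q p', ?_⟩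
    intro c
    -- coloring of first-coordinate sets by induced colorings
    set d : Finset ℕ → β :=
      fun A0 x => c (Fin.cons A0 (fun j => (x j).image Fin.val)) with hd
    obtain ⟨B0, hB0r, hB0card, g, hg⟩ := H0 d
    -- apply inductive hypothesis to g composed with restriction
    obtain ⟨B', hB', i, hi⟩ := H1 (fun A => g (fun j => toFin (p' j) (A j)))
    refine ⟨Fin.cons B0 B', ?_, i, ?_⟩
    · intro j
      refine Fin.cases ?_ ?_ j
      · exact ⟨hB0r, hB0card⟩
      · intro j'; exact ⟨(hB' j').1, (hB' j').2⟩
    · intro A hA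
      have hA0 : A 0 ⊆ B0 := by
        have := (hA 0).1; rwa [Fin.cons_zero] at this
      have hAj : ∀ j : Fin s, A j.succ ⊆ B' j ∧ (A j.succ).card = n j.succ := by
        intro j
        have h1 := (hA j.succ).1
        rw [Fin.cons_succ] at h1
        exact ⟨h1, (hA j.succ).2⟩
      have key : c A = d (A 0) (fun j => toFin (p' j) (A j.succ)) := by
        rw [hd]
        congr 1
        funext j
        refine Fin.cases ?_ ?_ j
        · simp
        · intro j'
          rw [Fin.cons_succ, image_toFin (fun x hx => (hB' j').1 ((hAj j').1 hx))]
      rw [key]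
      have hdg : d (A 0) = g := hg (A 0) hA0 (hA 0).2
      rw [hdg]
      exact hi (fun j => A j.succ) hAj

/-- Finite product Ramsey theorem for sets: for every `s < ω`, all
`n j ≤ m j` (`j < s`) and every `k ≥ 2`, there are `p j` (`j < s`) such that for every
`k`-coloring of the products `∏_{j<s} [p j]^{n j}` there are `B j ∈ [p j]^{m j}` with
`∏_{j<s} [B j]^{n j}` monochromatic. -/
theorem stmt_13 (s : ℕ) (n m : Fin s → ℕ) (h : ∀ j, n j ≤ m j) (k : ℕ) (hk : 2 ≤ k) :
    ∃ p : Fin s → ℕ,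
      ∀ c : (∀ j : Fin s, Finset (Fin (p j))) → Fin k,
        ∃ B : ∀ j : Fin s, Finset (Fin (p j)),
          (∀ j, (B j).card = m j) ∧
          ∃ i : Fin k,
            ∀ A : ∀ j : Fin s, Finset (Fin (p j)),
              (∀ j, (A j).card = n j ∧ A j ⊆ B j) → c A = i := by
  obtain ⟨p, H⟩ := prodRamsey (Fin k) s n m
  refine ⟨p, ?_⟩
  intro c
  obtain ⟨B, hB, i, hmono⟩ := H (fun A => c (fun j => toFin (p j) (A j)))
  refine ⟨fun j => toFin (p j) (B j), fun j => by rw [toFin_card (hB j).1, (hB j).2], i, ?_⟩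
  intro A hA
  have key : c A = c (fun j => toFin (p j) ((A j).image Fin.val)) := by
    congr 1
    funext j
    rw [toFin_image]
  rw [key]
  apply hmono
  intro j
  constructor
  · intro x hx
    obtain ⟨a, ha, rfl⟩ := Finset.mem_image.mp hx
    exact mem_toFin.mp ((hA j).2 ha)
  · rw [Finset.card_image_of_injective _ Fin.val_injective]
    exact (hA j).1
end

section
/- If U is a rapid p-point ultrafilter on ω, then any ultrafilter obtained as the Fubini product U ⊗ U is Tukey equivalent to U. -/
/-- Tukey reducibility: `V ≤_T U` iff there is a map `f` sending members of `U` to members of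
`V` and sending every cofinal subset of `(U, ⊇)` to a cofinal subset of `(V, ⊇)`. -/
def TukeyLe {α β : Type} (V : Ultrafilter β) (U : Ultrafilter α) : Prop :=
  ∃ f : Set α → Set β,
    (∀ X ∈ U, f X ∈ V) ∧
    ∀ C : Set (Set α), C ⊆ {X | X ∈ U} → (∀ A ∈ U, ∃ B ∈ C, B ⊆ A) →
      ∀ A ∈ V, ∃ B ∈ C, f B ⊆ A

/-- Auxiliary monotone map from sets of naturals to subsets of the plane. -/
def fub (X : Set ℕ) : Set (ℕ × ℕ) :=
  {p : ℕ × ℕ | p.1 ∈ X ∧ p.2 ∈ X ∧ p.1 < (X ∩ Set.Iio p.2).ncard}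

lemma fub_mono {X X' : Set ℕ} (h : X' ⊆ X) : fub X' ⊆ fub X := by
  rintro ⟨n, m⟩ ⟨h1, h2, h3⟩
  refine ⟨h h1, h h2, lt_of_lt_of_le h3 (Set.ncard_le_ncard ?_ ?_)⟩
  · exact fun x hx => ⟨h hx.1, hx.2⟩
  · exact (Set.finite_Iio m).inter_of_right X

lemma tail_mem (U : Ultrafilter ℕ)
    (hnp : ∀ A : Set ℕ, A.Finite → A ∉ U)
    {X : Set ℕ} (hX : X ∈ U) (n : ℕ) :
    {m | m ∈ X ∧ n < (X ∩ Set.Iio m).ncard} ∈ U := by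
  set Bad : Set ℕ := {m | m ∈ X ∧ (X ∩ Set.Iio m).ncard ≤ n} with hBad
  have hmono : ∀ a ∈ X, ∀ b ∈ X, a < b →
      (X ∩ Set.Iio a).ncard < (X ∩ Set.Iio b).ncard := by
    intro a ha b hb hab
    apply Set.ncard_lt_ncard
    · constructor
      · exact fun x hx => ⟨hx.1, lt_trans hx.2 hab⟩
      · intro hsub
        have : a ∈ X ∩ Set.Iio a := hsub ⟨ha, hab⟩
        exact absurd this.2 (lt_irrefl a)
    · exact (Set.finite_Iio b).inter_of_right X
  have hinj : Set.InjOn (fun m => (X ∩ Set.Iio m).ncard) Bad := by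
    intro a ha b hb hab
    rcases lt_trichotomy a b with h | h | h
    · exact absurd hab (ne_of_lt (hmono a ha.1 b hb.1 h))
    · exact h
    · exact absurd hab.symm (ne_of_lt (hmono b hb.1 a ha.1 h))
  have hBadFin : Bad.Finite := by
    apply Set.Finite.of_finite_image ?_ hinj
    apply Set.Finite.subset (Set.finite_Iic n)
    rintro x ⟨m, hm, rfl⟩
    exact hm.2
  have hBadc : Badᶜ ∈ U := Ultrafilter.compl_mem_iff_notMem.mpr (hnp Bad hBadFin)
  apply Filter.mem_of_superset (Filter.inter_mem hX hBadc)
  rintro m ⟨hmX, hmB⟩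
  refine ⟨hmX, ?_⟩
  by_contra hc
  exact hmB ⟨hmX, not_lt.mp hc⟩

/-- If `U` is a rapid p-point ultrafilter on ω, then the Fubini product
`U ⊗ U` is Tukey equivalent to `U`. -/
theorem stmt_17 (U : Ultrafilter ℕ)
    (hnp : ∀ A : Set ℕ, A.Finite → A ∉ U)
    (hrapid : ∀ f : ℕ → ℕ, ∃ X ∈ U, ∀ n, (X ∩ Set.Iio (f n)).ncard ≤ n)
    (hpp : ∀ X : ℕ → Set ℕ, (∀ n, X n ∈ U) → ∃ Y ∈ U, ∀ n, (Y \ X n).Finite)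
    (W : Ultrafilter (ℕ × ℕ))
    (hW : ∀ A : Set (ℕ × ℕ), A ∈ W ↔ {n : ℕ | {m : ℕ | (n, m) ∈ A} ∈ U} ∈ U) :
    TukeyLe W U ∧ TukeyLe U W := by
  classical
  constructor
  · -- W ≤_T U via fub
    refine ⟨fub, ?_, ?_⟩
    · intro X hX
      rw [hW]
      apply Filter.mem_of_superset hX
      intro n hn
      show {m : ℕ | (n, m) ∈ fub X} ∈ U
      apply Filter.mem_of_superset (tail_mem U hnp hX n)
      rintro m ⟨hm1, hm2⟩
      exact ⟨hn, hm1, hm2⟩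
    · intro C hCsub hCcof A hA
      set S : Set ℕ := {n | {m : ℕ | (n, m) ∈ A} ∈ U} with hSdef
      have hS : S ∈ U := (hW A).mp hA
      set Xn : ℕ → Set ℕ := fun n => if n ∈ S then {m : ℕ | (n, m) ∈ A} else Set.univ
        with hXndef
      have hXn : ∀ n, Xn n ∈ U := by
        intro n
        simp only [hXndef]
        split_ifs with h
        · exact h
        · exact Filter.univ_mem
      obtain ⟨Y, hY, hfin⟩ := hpp Xn hXn
      set k : ℕ → ℕ := fun n => ((hfin n).toFinset.sup id) + 1 with hkdef
      obtain ⟨X, hXU, hXrap⟩ := hrapid k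
      have hZ : X ∩ (Y ∩ S) ∈ U :=
        Filter.inter_mem hXU (Filter.inter_mem hY hS)
      have hZA : fub (X ∩ (Y ∩ S)) ⊆ A := by
        rintro ⟨n, m⟩ ⟨hn, hm, hlt⟩
        have hlt' : n < ((X ∩ (Y ∩ S)) ∩ Set.Iio m).ncard := hlt
        have hkn : k n = (hfin n).toFinset.sup id + 1 := rfl
        have hnS : n ∈ S := hn.2.2
        have hkm : k n ≤ m := by
          by_contra hc
          push_neg at hc
          have hsub : (X ∩ (Y ∩ S)) ∩ Set.Iio m ⊆ X ∩ Set.Iio (k n) := by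
            rintro x ⟨hx1, hx2⟩
            exact ⟨hx1.1, lt_of_lt_of_le hx2 (le_of_lt hc)⟩
          have hle : ((X ∩ (Y ∩ S)) ∩ Set.Iio m).ncard ≤ (X ∩ Set.Iio (k n)).ncard :=
            Set.ncard_le_ncard hsub ((Set.finite_Iio (k n)).inter_of_right X)
          have := le_trans hle (hXrap n)
          omega
        have hmXn : m ∈ Xn n := by
          by_contra hc
          have hmem : m ∈ (hfin n).toFinset := (Set.Finite.mem_toFinset _).mpr ⟨hm.2.1, hc⟩
          have := Finset.le_sup (f := id) hmem
          simp only [id] at this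
          omega
        have : Xn n = {m : ℕ | (n, m) ∈ A} := by
          simp only [hXndef, if_pos hnS]
        rw [this] at hmXn
        exact hmXn
      obtain ⟨B, hBC, hBZ⟩ := hCcof _ hZ
      exact ⟨B, hBC, (fub_mono hBZ).trans hZA⟩
  · -- U ≤_T W via projection
    refine ⟨fun B => {n | {m : ℕ | (n, m) ∈ B} ∈ U}, ?_, ?_⟩
    · intro B hB
      exact (hW B).mp hB
    · intro C hCsub hCcof A hA
      have hA' : {p : ℕ × ℕ | p.1 ∈ A} ∈ W := by
        rw [hW]
        apply Filter.mem_of_superset hA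
        intro n hn
        have : {m : ℕ | (n, m) ∈ {p : ℕ × ℕ | p.1 ∈ A}} = Set.univ := by
          ext m; simpa using hn
        show {m : ℕ | (n, m) ∈ {p : ℕ × ℕ | p.1 ∈ A}} ∈ U
        rw [this]
        exact Filter.univ_mem
      obtain ⟨B, hBC, hBA'⟩ := hCcof _ hA'
      refine ⟨B, hBC, ?_⟩
      intro n hn
      by_contra hna
      have hsub : {m : ℕ | (n, m) ∈ B} ⊆ (∅ : Set ℕ) := by
        intro m hm
        exact hna (hBA' hm)
      exact hnp ∅ Set.finite_empty (Filter.mem_of_superset hn hsub)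
end

section
/- Let F be a Nash-Williams family of finite subsets of ω (no member is an initial segment of another, under increasing enumeration) that is a front on an infinite set A (every infinite subset of A has an initial segment in F). Then for every partition F = F_0 ∪ F_1 there is an infinite B ⊆ A such that all members of F that are subsets of B lie in a single piece F_i. -/
/-- `s` is an initial segment of the finite set `t` (under increasing enumerations). -/
def FinInitSeg (s t : Finset ℕ) : Prop :=
  s ⊆ t ∧ ∀ a ∈ s, ∀ b ∈ t, b ∉ s → a < b

/-- `s` is an initial segment of the infinite set `X`. -/
def SetInitSeg (s : Finset ℕ) (X : Set ℕ) : Prop :=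
  ↑s ⊆ X ∧ ∀ a ∈ s, ∀ b ∈ X, b ∉ s → a < b

namespace NWAux

lemma finInitSeg_refl (s : Finset ℕ) : FinInitSeg s s :=
  ⟨Finset.Subset.refl s, fun _ _ b hb hnb => absurd hb hnb⟩

lemma finInitSeg_empty (t : Finset ℕ) : FinInitSeg ∅ t :=
  ⟨Finset.empty_subset t, fun a ha => absurd ha (Finset.notMem_empty a)⟩

variable (F F0 : Set (Finset ℕ))

/-- `X` accepts `s` if every member of `F` extending `s` inside `s ∪ X` is in `F0`. -/
def Accepts (X : Set ℕ) (s : Finset ℕ) : Prop :=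
  ∀ t ∈ F, FinInitSeg s t → ↑(t \ s) ⊆ X → t ∈ F0

def Rejects (X : Set ℕ) (s : Finset ℕ) : Prop :=
  ∀ Y, Y ⊆ X → Y.Infinite → ¬ Accepts F F0 Y s

def Decides (X : Set ℕ) (s : Finset ℕ) : Prop :=
  Accepts F F0 X s ∨ Rejects F F0 X s

variable {F F0}

lemma Accepts.mono {X Y : Set ℕ} {s : Finset ℕ} (h : Accepts F F0 X s) (hYX : Y ⊆ X) :
    Accepts F F0 Y s := fun t ht hst hsub => h t ht hst (hsub.trans hYX)

lemma Rejects.mono {X Y : Set ℕ} {s : Finset ℕ} (h : Rejects F F0 X s) (hYX : Y ⊆ X) :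
    Rejects F F0 Y s := fun Z hZ => h Z (hZ.trans hYX)

lemma Decides.mono {X Y : Set ℕ} {s : Finset ℕ} (h : Decides F F0 X s) (hYX : Y ⊆ X) :
    Decides F F0 Y s := h.imp (·.mono hYX) (·.mono hYX)

lemma exists_decides (F F0 : Set (Finset ℕ)) (X : Set ℕ) (hX : X.Infinite) (s : Finset ℕ) :
    ∃ Y, Y ⊆ X ∧ Y.Infinite ∧ Decides F F0 Y s := by
  by_cases h : Rejects F F0 X s
  · exact ⟨X, Set.Subset.refl X, hX, Or.inr h⟩
  · unfold Rejects at h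
    push_neg at h
    obtain ⟨Y, hYX, hYinf, hacc⟩ := h
    exact ⟨Y, hYX, hYinf, Or.inl hacc⟩

lemma exists_decides_finset (F F0 : Set (Finset ℕ)) (X : Set ℕ) (hX : X.Infinite)
    (S : Finset (Finset ℕ)) :
    ∃ Y, Y ⊆ X ∧ Y.Infinite ∧ ∀ s ∈ S, Decides F F0 Y s := by
  classical
  induction S using Finset.induction_on with
  | empty => exact ⟨X, Set.Subset.refl X, hX, by simp⟩
  | insert a S hnotmem ih =>
    obtain ⟨Y, hYX, hYinf, hYdec⟩ := ih
    obtain ⟨Z, hZY, hZinf, hZdec⟩ := exists_decides F F0 Y hYinf a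
    refine ⟨Z, hZY.trans hYX, hZinf, fun s hs => ?_⟩
    rcases Finset.mem_insert.mp hs with rfl | hs
    · exact hZdec
    · exact (hYdec s hs).mono hZY

-- One step of the fusion construction.
open Classical in
noncomputable def step (F F0 : Set (Finset ℕ)) (p : Set ℕ × Finset ℕ) : Set ℕ × Finset ℕ :=
  if h : p.1.Infinite then
    ((exists_decides_finset F F0 (p.1 \ Set.Iic (sInf p.1))
        (h.diff (Set.finite_Iic _)) (insert (sInf p.1) p.2).powerset).choose,
      insert (sInf p.1) p.2)
  else p

lemma step_spec {F F0 : Set (Finset ℕ)} {p : Set ℕ × Finset ℕ} (h : p.1.Infinite) :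
    (step F F0 p).1 ⊆ p.1 \ Set.Iic (sInf p.1) ∧ (step F F0 p).1.Infinite ∧
      (∀ s ∈ (insert (sInf p.1) p.2).powerset, Decides F F0 (step F F0 p).1 s) ∧
      (step F F0 p).2 = insert (sInf p.1) p.2 := by
  have hspec := (exists_decides_finset F F0 (p.1 \ Set.Iic (sInf p.1))
        (h.diff (Set.finite_Iic _)) (insert (sInf p.1) p.2).powerset).choose_spec
  unfold step
  rw [dif_pos h]
  exact ⟨hspec.1, hspec.2.1, hspec.2.2, rfl⟩

end NWAux

open NWAux in
/-- Nash-Williams theorem: if `F` is a Nash-Williams family of finite subsets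
of ω which is a front on an infinite set `A`, then for every partition `F = F0 ∪ F1` there
is an infinite `B ⊆ A` such that every member of `F` included in `B` lies in a single piece. -/
theorem stmt_18 (F F0 F1 : Set (Finset ℕ)) (A : Set ℕ) (hA : A.Infinite)
    (hNW : ∀ s ∈ F, ∀ t ∈ F, s ≠ t → ¬ FinInitSeg s t)
    (hfront : ∀ X : Set ℕ, X ⊆ A → X.Infinite → ∃ s ∈ F, SetInitSeg s X)
    (hpart : F = F0 ∪ F1) :
    ∃ B : Set ℕ, B ⊆ A ∧ B.Infinite ∧
      ((∀ s ∈ F, ↑s ⊆ B → s ∈ F0) ∨ (∀ s ∈ F, ↑s ⊆ B → s ∈ F1)) := by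
  classical
  -- members of F1 \ F0 live in F1:
  have hF1 : ∀ s ∈ F, s ∉ F0 → s ∈ F1 := by
    intro s hs hs0
    rw [hpart] at hs
    exact hs.resolve_left hs0
  -- initial set deciding ∅
  obtain ⟨Y0, hY0A, hY0inf, hY0dec⟩ := exists_decides F F0 A hA ∅
  -- fusion sequence
  set st : ℕ → Set ℕ × Finset ℕ := fun n => (step F F0)^[n] (Y0, ∅) with hst_def
  have hst0 : st 0 = (Y0, ∅) := rfl
  have hst_succ : ∀ n, st (n + 1) = step F F0 (st n) := by
    intro n
    simp [hst_def, Function.iterate_succ_apply']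
  set X : ℕ → Set ℕ := fun n => (st n).1 with hX_def
  set b : ℕ → ℕ := fun n => sInf (X n) with hb_def
  have hXinf : ∀ n, (X n).Infinite := by
    intro n
    induction n with
    | zero => exact hY0inf
    | succ n ih =>
      have h := (step_spec (F := F) (F0 := F0) (p := st n) ih).2.1
      show (st (n + 1)).1.Infinite
      rw [hst_succ n]
      exact h
  have hspec : ∀ n, X (n + 1) ⊆ X n \ Set.Iic (b n) ∧
      (∀ s ∈ (insert (b n) (st n).2).powerset, Decides F F0 (X (n + 1)) s) ∧
      (st (n + 1)).2 = insert (b n) (st n).2 := by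
    intro n
    have h := step_spec (F := F) (F0 := F0) (p := st n) (hXinf n)
    rw [← hst_succ n] at h
    exact ⟨h.1, h.2.2.1, h.2.2.2⟩
  have hbmem : ∀ n, b n ∈ X n := fun n => Nat.sInf_mem (hXinf n).nonempty
  have hchain : ∀ m n, n ≤ m → X m ⊆ X n := by
    intro m
    induction m with
    | zero => intro n hn; rw [Nat.le_zero.mp hn]
    | succ m ih =>
      intro n hn
      rcases Nat.lt_or_ge n (m + 1) with h | h
      · exact ((hspec m).1.trans Set.diff_subset).trans (ih n (Nat.lt_succ_iff.mp h))
      · rw [Nat.le_antisymm hn h]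
  have hblt : ∀ n, b n < b (n + 1) := by
    intro n
    have := (hspec n).1 (hbmem (n + 1))
    exact lt_of_not_ge (fun h => this.2 h)
  have hbs : StrictMono b := strictMono_nat_of_lt_succ hblt
  set B : Set ℕ := Set.range b with hB_def
  have hBinf : B.Infinite := Set.infinite_range_of_injective hbs.injective
  have hBA : B ⊆ A := by
    rintro x ⟨n, rfl⟩
    exact hY0A (hchain n 0 (Nat.zero_le n) (hbmem n))
  have hBX : ∀ n m, n ≤ m → b m ∈ X n := fun n m h => hchain m n h (hbmem m)
  -- the finite sets accumulated by the fusion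
  have hd : ∀ n, (st n).2 = Finset.image b (Finset.range n) := by
    intro n
    induction n with
    | zero => simp [hst0]
    | succ n ih =>
      rw [(hspec n).2.2, ih, Finset.range_add_one, Finset.image_insert]
  -- B decides all of its finite subsets
  have hBdec : ∀ s : Finset ℕ, ↑s ⊆ B → Decides F F0 B s := by
    intro s hsB
    rcases s.eq_empty_or_nonempty with rfl | hne
    · have : B ⊆ Y0 := by
        rintro x ⟨n, rfl⟩; exact hBX 0 n (Nat.zero_le n)
      exact hY0dec.mono this
    · -- find the index of max s
      obtain ⟨n, hbn⟩ := hsB (s.max'_mem hne)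
      have hsd : s ∈ (insert (b n) (st n).2).powerset := by
        rw [Finset.mem_powerset, ← (hspec n).2.2, hd (n + 1)]
        intro a ha
        obtain ⟨m, rfl⟩ := hsB ha
        have : b m ≤ b n := (s.le_max' _ ha).trans_eq hbn.symm
        exact Finset.mem_image.mpr ⟨m, Finset.mem_range.mpr
          (Nat.lt_succ_of_le (hbs.le_iff_le.mp this)), rfl⟩
      rcases (hspec n).2.1 s hsd with hacc | hrej
      · -- X (n+1) accepts s, hence B accepts s
        left
        intro t ht hst hsub
        refine hacc t ht hst ?_
        intro x hx
        obtain ⟨m, rfl⟩ := hsub hx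
        have hlt : b n < b m := by
          rw [hbn]
          exact hst.2 _ (s.max'_mem hne) _ (Finset.mem_sdiff.mp (by exact_mod_cast hx)).1
            (Finset.mem_sdiff.mp (by exact_mod_cast hx)).2
        exact hBX (n + 1) m (hbs.lt_iff_lt.mp hlt)
      · -- X (n+1) rejects s, hence B rejects s
        right
        intro Z hZB hZinf hacc
        have hfin : (Z \ X (n + 1)).Finite := by
          apply Set.Finite.subset (Set.finite_range (fun i : Fin (n + 1) => b i.val))
          intro z hz
          obtain ⟨m, rfl⟩ := hZB hz.1
          have hm : m < n + 1 := by
            by_contra h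
            exact hz.2 (hBX (n + 1) m (le_of_not_gt h))
          exact ⟨⟨m, hm⟩, rfl⟩
        have hZ'inf : (Z ∩ X (n + 1)).Infinite := by
          have : Z \ (Z \ X (n + 1)) ⊆ Z ∩ X (n + 1) := by
            intro z hz
            rcases hz with ⟨hz1, hz2⟩
            exact ⟨hz1, by_contra fun h => hz2 ⟨hz1, h⟩⟩
          exact (hZinf.diff hfin).mono this
        exact hrej _ Set.inter_subset_right hZ'inf (hacc.mono Set.inter_subset_left)
  -- key lemma: extensions of rejected sets are almost always rejected
  have hkey : ∀ s : Finset ℕ, ↑s ⊆ B → s ∉ F → Rejects F F0 B s →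
      {n : ℕ | n ∈ B ∧ (∀ a ∈ s, a < n) ∧ ¬ Rejects F F0 B (insert n s)}.Finite := by
    intro s hsB hsF hrej
    by_contra hinf
    have hinf : Set.Infinite {n : ℕ | n ∈ B ∧ (∀ a ∈ s, a < n) ∧ ¬ Rejects F F0 B (insert n s)} := hinf
    set Y : Set ℕ := {n : ℕ | n ∈ B ∧ (∀ a ∈ s, a < n) ∧ ¬ Rejects F F0 B (insert n s)}
      with hY_def
    have hYB : Y ⊆ B := fun n hn => hn.1
    have hYacc : ∀ n ∈ Y, Accepts F F0 B (insert n s) := by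
      intro n hn
      have hdec := hBdec (insert n s) (by
        rw [Finset.coe_insert]
        exact Set.insert_subset (hn.1) hsB)
      exact hdec.resolve_right hn.2.2
    -- Y accepts s, contradiction with rejection
    apply hrej Y hYB hinf
    intro t ht hst hsub
    rcases eq_or_ne t s with rfl | htne
    · exact absurd ht hsF
    have htsne : (t \ s).Nonempty := by
      rw [Finset.sdiff_nonempty]
      intro h
      exact htne (Finset.Subset.antisymm h hst.1)
    set n := (t \ s).min' htsne with hn_def
    have hnmem : n ∈ t \ s := (t \ s).min'_mem htsne
    have hnY : n ∈ Y := hsub (by exact_mod_cast hnmem)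
    refine hYacc n hnY t ht ?_ ?_
    · constructor
      · exact Finset.insert_subset (Finset.mem_sdiff.mp hnmem).1 hst.1
      · intro a ha c hc hcn
        have hcs : c ∉ s := fun h => hcn (Finset.mem_insert_of_mem h)
        have hcts : c ∈ t \ s := Finset.mem_sdiff.mpr ⟨hc, hcs⟩
        have hnc : n < c := lt_of_le_of_ne ((t \ s).min'_le c hcts)
            (fun h => hcn (h ▸ Finset.mem_insert_self n s))
        rcases Finset.mem_insert.mp ha with rfl | ha
        · exact hnc
        · exact hst.2 a ha c hc hcs
    · intro x hx
      have hx' := Finset.mem_sdiff.mp (by exact_mod_cast hx : x ∈ t \ insert n s)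
      have : x ∈ t \ s := Finset.mem_sdiff.mpr
        ⟨hx'.1, fun h => hx'.2 (Finset.mem_insert_of_mem h)⟩
      exact hYB (hsub (by exact_mod_cast this))
  -- Main case split
  rcases hBdec ∅ (by simp) with hacc | hrej
  · -- B accepts ∅: all members of F inside B are in F0
    refine ⟨B, hBA, hBinf, Or.inl fun s hs hsub => ?_⟩
    exact hacc s hs (finInitSeg_empty s) (by rwa [Finset.sdiff_empty])
  · -- B rejects ∅: diagonalize to get the F1 side
    set Pinv : Finset ℕ → Prop := fun d => ↑d ⊆ B ∧ ∀ s ⊆ d,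
        (s ∈ F → s ∈ F1) ∧ ((∀ t ∈ F, ¬ FinInitSeg t s) → Rejects F F0 B s)
      with hPinv_def
    have hrej_of_F0 : ∀ s ∈ F, s ∈ F0 → ¬ Rejects F F0 B s := by
      intro s hsF hs0 hr
      apply hr B (Set.Subset.refl B) hBinf
      intro t ht hst _
      rcases eq_or_ne s t with rfl | hne
      · exact hs0
      · exact absurd hst (hNW s hsF t ht hne)
    have base : Pinv ∅ := by
      refine ⟨by simp, fun s hs => ?_⟩
      rw [Finset.subset_empty.mp hs]
      constructor
      · intro hEF
        refine hF1 ∅ hEF fun hE0 => ?_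
        exact hrej_of_F0 ∅ hEF hE0 hrej
      · intro _
        exact hrej
    have hstep : ∀ d : Finset ℕ, Pinv d →
        ∃ n, n ∈ B ∧ (∀ a ∈ d, a < n) ∧ Pinv (insert n d) := by
      intro d hd
      -- bad sets
      set Bad : Finset ℕ → Set ℕ := fun s =>
        {n : ℕ | n ∈ B ∧ (∀ a ∈ s, a < n) ∧ ¬ Rejects F F0 B (insert n s)} with hBad_def
      set U : Set ℕ := ⋃ s ∈ d.powerset, (Bad s ∩ {_n : ℕ | ∀ t ∈ F, ¬ FinInitSeg t s})
        with hU_def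
      have hUfin : U.Finite := by
        refine Set.Finite.biUnion d.powerset.finite_toSet fun s hs => ?_
        by_cases hfree : ∀ t ∈ F, ¬ FinInitSeg t s
        · have hsF : s ∉ F := fun h => hfree s h (finInitSeg_refl s)
          have hsB : ↑s ⊆ B := (Finset.coe_subset.mpr (Finset.mem_powerset.mp hs)).trans hd.1
          have := hkey s hsB hsF ((hd.2 s (Finset.mem_powerset.mp hs)).2 hfree)
          exact this.subset Set.inter_subset_left
        · have : Bad s ∩ {_n : ℕ | ∀ t ∈ F, ¬ FinInitSeg t s} = ∅ := by
            ext n; simp only [Set.mem_inter_iff, Set.mem_setOf_eq, Set.mem_empty_iff_false,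
              iff_false, not_and]
            exact fun _ h => hfree h
          rw [this]; exact Set.finite_empty
      obtain ⟨n, hn, hngt⟩ := (hBinf.diff hUfin).exists_gt (d.sup id)
      have hnB : n ∈ B := hn.1
      have hngtd : ∀ a ∈ d, a < n := fun a ha =>
        lt_of_le_of_lt (Finset.le_sup (f := id) ha) hngt
      refine ⟨n, hnB, hngtd, ?_⟩
      have hnd : n ∉ d := fun h => lt_irrefl n (hngtd n h)
      constructor
      · rw [Finset.coe_insert]
        exact Set.insert_subset hnB hd.1
      intro s hs
      by_cases hns : n ∈ s
      · -- s = insert n s' with s' ⊆ d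
        set s' := s.erase n with hs'_def
        have hs'd : s' ⊆ d := Finset.subset_insert_iff.mp hs
        have hseq : s = insert n s' := (Finset.insert_erase hns).symm
        have hs'lt : ∀ a ∈ s', a < n := fun a ha => hngtd a (hs'd ha)
        by_cases hfree : ∀ t ∈ F, ¬ FinInitSeg t s'
        · -- s' is free: B rejects s = insert n s'
          have hs'F : s' ∉ F := fun h => hfree s' h (finInitSeg_refl s')
          have hrejs : Rejects F F0 B s := by
            have hnnotBad : n ∉ Bad s' ∩ {_n : ℕ | ∀ t ∈ F, ¬ FinInitSeg t s'} := by
              intro hmem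
              exact hn.2 (Set.mem_biUnion (Finset.mem_powerset.mpr hs'd) hmem)
            rw [hseq]
            by_contra hnr
            exact hnnotBad ⟨⟨hnB, hs'lt, hnr⟩, hfree⟩
          constructor
          · intro hsF
            refine hF1 s hsF fun hs0 => ?_
            exact hrej_of_F0 s hsF hs0 hrejs
          · intro _
            exact hrejs
        · -- s' has an initial segment in F; so does s, making both clauses easy
          push_neg at hfree
          obtain ⟨t, htF, hts'⟩ := hfree
          have htn : n ∉ t := fun h => lt_irrefl n (hs'lt n (hts'.1 h))
          have hts : FinInitSeg t s := by
            refine ⟨hts'.1.trans (hseq ▸ Finset.subset_insert n s'), ?_⟩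
            intro a ha c hc hct
            rcases Finset.mem_insert.mp (hseq ▸ hc) with rfl | hc'
            · exact hs'lt a (hts'.1 ha)
            · exact hts'.2 a ha c hc' hct
          constructor
          · intro hsF
            exact absurd hts (hNW t htF s hsF (fun h => htn (h ▸ hns)))
          · intro hfr
            exact absurd hts (hfr t htF)
      · -- s ⊆ d: use the invariant
        exact hd.2 s ((Finset.subset_insert_iff_of_notMem hns).mp hs)
    -- iterate the step to build C
    set g : ℕ → {d : Finset ℕ // Pinv d} := fun k =>
      Nat.rec ⟨∅, base⟩ (fun _ p => ⟨insert (hstep p.1 p.2).choose p.1,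
        (hstep p.1 p.2).choose_spec.2.2⟩) k with hg_def
    set c : ℕ → ℕ := fun k => (hstep (g k).1 (g k).2).choose with hc_def
    have hgsucc : ∀ k, (g (k + 1)).1 = insert (c k) (g k).1 := fun k => rfl
    have hcB : ∀ k, c k ∈ B := fun k => (hstep (g k).1 (g k).2).choose_spec.1
    have hcgt : ∀ k, ∀ a ∈ (g k).1, a < c k :=
      fun k => (hstep (g k).1 (g k).2).choose_spec.2.1
    have hcmem : ∀ k, c k ∈ (g (k + 1)).1 := by
      intro k; rw [hgsucc]; exact Finset.mem_insert_self _ _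
    have hcs : StrictMono c := by
      apply strictMono_nat_of_lt_succ
      intro k
      exact hcgt (k + 1) (c k) (hcmem k)
    have hgim : ∀ k, (g k).1 = Finset.image c (Finset.range k) := by
      intro k
      induction k with
      | zero => simp [hg_def]
      | succ k ih => rw [hgsucc, ih, Finset.range_add_one, Finset.image_insert]
    set C : Set ℕ := Set.range c with hC_def
    have hCB : C ⊆ B := by rintro x ⟨k, rfl⟩; exact hcB k
    refine ⟨C, hCB.trans hBA, Set.infinite_range_of_injective hcs.injective,
      Or.inr fun s hsF hsC => ?_⟩
    have hsg : s ⊆ (g (s.sup id + 1)).1 := by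
      rw [hgim (s.sup id + 1)]
      intro a ha
      obtain ⟨i, rfl⟩ := hsC ha
      exact Finset.mem_image.mpr ⟨i, Finset.mem_range.mpr
        (Nat.lt_succ_of_le (le_trans hcs.le_apply (Finset.le_sup (f := id) ha))), rfl⟩
    exact ((g (s.sup id + 1)).2.2 s hsg).1 hsF
end
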